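/- Under the HER(p) model (independent edges Y_{ij} ~ Bernoulli(p_{ij})), with W = (1/n) Σ_i (D_i − μ⁰_i)², the variance of W equals (4/n²)[ Σ_{i<j} σ²_{ij}(1 − 2p_{ij} + Δ_i + Δ_j)² + Σ_{i<j<k} (σ²_{ij}σ²_{ik} + σ²_{ij}σ²_{jk} + σ²_{ik}σ²_{jk}) ], where σ²_{ij} = p_{ij}(1−p_{ij}), δ_{ij} = p_{ij} − p⁰_{ij}, and Δ_i = Σ_{j≠i} δ_{ij}. -/

import Mathlib

open MeasureTheory ProbabilityTheory Finset



section Comb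
variable {n : ℕ}

lemma swap_lt_sum (F : Fin n → Fin n → ℝ) :
    ∑ i : Fin n, ∑ j ∈ univ.filter (fun j => j < i), F i j
      = ∑ i : Fin n, ∑ j ∈ univ.filter (fun j => i < j), F j i := by
  rw [Finset.sum_comm' (t' := (univ : Finset (Fin n)))
    (s' := fun j => univ.filter (fun i => j < i))]
  intro x y
  simp only [Finset.mem_filter, Finset.mem_univ, true_and, and_true]

lemma sum_ne_eq_sum_lt (F : Fin n → Fin n → ℝ) :
    ∑ i : Fin n, ∑ j ∈ univ.filter (fun j => j ≠ i), F i j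
      = ∑ i : Fin n, ∑ j ∈ univ.filter (fun j => i < j), (F i j + F j i) := by
  have h1 : ∀ i : Fin n, (univ.filter (fun j => j ≠ i))
      = (univ.filter (fun j => i < j)) ∪ (univ.filter (fun j => j < i)) := by
    intro i
    ext j
    simp only [Finset.mem_filter, Finset.mem_univ, true_and, Finset.mem_union]
    constructor
    · intro h; exact (Ne.lt_or_gt h.symm)
    · rintro (h | h)
      · exact ne_of_gt h
      · exact ne_of_lt h
  have h2 : ∀ i : Fin n, Disjoint (univ.filter (fun j => i < j))
      (univ.filter (fun j => j < i)) := by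
    intro i
    rw [Finset.disjoint_left]
    intro j hj hj'
    simp only [Finset.mem_filter] at hj hj'
    exact absurd (hj.2.trans hj'.2) (lt_irrefl _)
  calc ∑ i : Fin n, ∑ j ∈ univ.filter (fun j => j ≠ i), F i j
      = ∑ i : Fin n, (∑ j ∈ univ.filter (fun j => i < j), F i j
          + ∑ j ∈ univ.filter (fun j => j < i), F i j) := by
        refine Finset.sum_congr rfl fun i _ => ?_
        rw [h1 i, Finset.sum_union (h2 i)]
    _ = _ := by
        rw [Finset.sum_add_distrib, swap_lt_sum, ← Finset.sum_add_distrib]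
        exact Finset.sum_congr rfl fun i _ => (Finset.sum_add_distrib).symm

lemma sq_sum_eq (s : Finset (Fin n)) (f : Fin n → ℝ) :
    (∑ j ∈ s, f j) ^ 2 = ∑ j ∈ s, f j ^ 2
      + 2 * ∑ j ∈ s, ∑ k ∈ s.filter (fun k => j < k), f j * f k := by
  have expand : (∑ j ∈ s, f j) ^ 2 = ∑ j ∈ s, ∑ k ∈ s, f j * f k := by
    rw [sq, Finset.sum_mul_sum]
  have hsplit : ∀ j ∈ s, ∑ k ∈ s, f j * f k
      = f j ^ 2 + ∑ k ∈ s.filter (fun k => j < k), f j * f k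
        + ∑ k ∈ s.filter (fun k => k < j), f j * f k := by
    intro j hj
    have hs : s = {j} ∪ ((s.filter (fun k => j < k)) ∪ (s.filter (fun k => k < j))) := by
      ext k
      simp only [Finset.mem_union, Finset.mem_singleton, Finset.mem_filter]
      constructor
      · intro hk
        rcases lt_trichotomy j k with h | h | h
        · exact Or.inr (Or.inl ⟨hk, h⟩)
        · exact Or.inl h.symm
        · exact Or.inr (Or.inr ⟨hk, h⟩)
      · rintro (h | ⟨h, _⟩ | ⟨h, _⟩)
        · subst h; exact hj
        · exact h
        · exact h
    have d1 : Disjoint ({j} : Finset (Fin n))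
        ((s.filter (fun k => j < k)) ∪ (s.filter (fun k => k < j))) := by
      rw [Finset.disjoint_left]
      intro k hk hk'
      simp only [Finset.mem_singleton] at hk
      subst hk
      simp only [Finset.mem_union, Finset.mem_filter] at hk'
      rcases hk' with ⟨_, h⟩ | ⟨_, h⟩ <;> exact absurd h (lt_irrefl _)
    have d2 : Disjoint (s.filter (fun k => j < k)) (s.filter (fun k => k < j)) := by
      rw [Finset.disjoint_left]
      intro k hk hk'
      simp only [Finset.mem_filter] at hk hk'
      exact absurd (hk.2.trans hk'.2) (lt_irrefl _)
    conv_lhs => rw [hs]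
    rw [Finset.sum_union d1, Finset.sum_union d2, Finset.sum_singleton]
    ring
  rw [expand, Finset.sum_congr rfl hsplit]
  rw [Finset.sum_add_distrib, Finset.sum_add_distrib]
  have hswap : ∑ j ∈ s, ∑ k ∈ s.filter (fun k => k < j), f j * f k
      = ∑ j ∈ s, ∑ k ∈ s.filter (fun k => j < k), f j * f k := by
    rw [Finset.sum_comm' (t' := s) (s' := fun k => s.filter (fun j => k < j))]
    · exact Finset.sum_congr rfl fun j _ => Finset.sum_congr rfl fun k _ => mul_comm _ _
    · intro x y
      simp only [Finset.mem_filter]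
      tauto
  rw [hswap]; ring
end Comb

section Comb
variable {n : ℕ}

lemma cherry_reindex (F : Fin n → Fin n → Fin n → ℝ) :
    ∑ c : Fin n, ∑ j ∈ univ.filter (fun j => j ≠ c),
        ∑ k ∈ (univ.filter (fun k => k ≠ c)).filter (fun k => j < k), F c j k
      = ∑ a : Fin n, ∑ b ∈ univ.filter (fun b => a < b), ∑ c ∈ univ.filter (fun c => b < c),
          (F a b c + F b a c + F c a b) := by
  have key : ∀ c : Fin n, ∑ j ∈ univ.filter (fun j => j ≠ c),
        ∑ k ∈ (univ.filter (fun k => k ≠ c)).filter (fun k => j < k), F c j k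
      = (∑ j ∈ univ.filter (fun j => c < j), ∑ k ∈ univ.filter (fun k => j < k), F c j k)
        + ((∑ j ∈ univ.filter (fun j => j < c), ∑ k ∈ univ.filter (fun k => c < k), F c j k)
        + (∑ j ∈ univ.filter (fun j => j < c),
            ∑ k ∈ univ.filter (fun k => j < k ∧ k < c), F c j k)) := by
    intro c
    have hsplit : (univ.filter (fun j : Fin n => j ≠ c))
        = (univ.filter (fun j => c < j)) ∪ (univ.filter (fun j => j < c)) := by
      ext j
      simp only [Finset.mem_filter, Finset.mem_univ, true_and, Finset.mem_union]
      constructor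
      · intro h; exact (Ne.lt_or_gt h.symm)
      · rintro (h | h)
        · exact ne_of_gt h
        · exact ne_of_lt h
    have hdisj : Disjoint (univ.filter (fun j : Fin n => c < j))
        (univ.filter (fun j => j < c)) := by
      rw [Finset.disjoint_left]
      intro j hj hj'
      simp only [Finset.mem_filter] at hj hj'
      exact absurd (hj.2.trans hj'.2) (lt_irrefl _)
    have e1 : ∑ j ∈ univ.filter (fun j : Fin n => j ≠ c),
          (∑ k ∈ (univ.filter (fun k => k ≠ c)).filter (fun k => j < k), F c j k)
        = ∑ j ∈ univ.filter (fun j => c < j),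
            (∑ k ∈ (univ.filter (fun k => k ≠ c)).filter (fun k => j < k), F c j k)
          + ∑ j ∈ univ.filter (fun j => j < c),
            (∑ k ∈ (univ.filter (fun k => k ≠ c)).filter (fun k => j < k), F c j k) := by
      rw [← Finset.sum_union hdisj]
      exact Finset.sum_congr hsplit (fun _ _ => rfl)
    rw [e1]
    congr 1
    · refine Finset.sum_congr rfl fun j hj => ?_
      simp only [Finset.mem_filter, Finset.mem_univ, true_and] at hj
      refine Finset.sum_congr ?_ fun _ _ => rfl
      ext k
      simp only [Finset.mem_filter, Finset.mem_univ, true_and]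
      constructor
      · rintro ⟨_, h⟩; exact h
      · intro h; exact ⟨ne_of_gt (hj.trans h), h⟩
    · refine Eq.trans (Finset.sum_congr rfl fun j hj => ?_) Finset.sum_add_distrib
      simp only [Finset.mem_filter, Finset.mem_univ, true_and] at hj
      have hin : (univ.filter (fun k : Fin n => k ≠ c)).filter (fun k => j < k)
          = (univ.filter (fun k => c < k)) ∪ (univ.filter (fun k => j < k ∧ k < c)) := by
        ext k
        simp only [Finset.mem_filter, Finset.mem_univ, true_and, Finset.mem_union]
        constructor
        · rintro ⟨hne, hlt⟩
          rcases Ne.lt_or_gt hne with h | h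
          · exact Or.inr ⟨hlt, h⟩
          · exact Or.inl h
        · rintro (h | ⟨h1, h2⟩)
          · exact ⟨ne_of_gt h, hj.trans h⟩
          · exact ⟨ne_of_lt h2, h1⟩
      have hd : Disjoint (univ.filter (fun k : Fin n => c < k))
          (univ.filter (fun k => j < k ∧ k < c)) := by
        rw [Finset.disjoint_left]
        intro k hk hk'
        simp only [Finset.mem_filter, Finset.mem_univ, true_and] at hk hk'
        exact absurd (hk.trans hk'.2) (lt_irrefl _)
      rw [← Finset.sum_union hd]
      exact Finset.sum_congr hin (fun _ _ => rfl)
  rw [Finset.sum_congr rfl fun c _ => key c]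
  rw [Finset.sum_add_distrib, Finset.sum_add_distrib]
  have hT2 : ∑ c : Fin n, ∑ j ∈ univ.filter (fun j => j < c),
        ∑ k ∈ univ.filter (fun k => c < k), F c j k
      = ∑ a : Fin n, ∑ b ∈ univ.filter (fun b => a < b),
          ∑ c ∈ univ.filter (fun c => b < c), F b a c := by
    rw [Finset.sum_comm' (t' := (univ : Finset (Fin n)))
      (s' := fun j => univ.filter (fun c => j < c))]
    intro x y
    simp only [Finset.mem_filter, Finset.mem_univ, true_and, and_true]
  have hT3 : ∑ c : Fin n, ∑ j ∈ univ.filter (fun j => j < c),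
        ∑ k ∈ univ.filter (fun k => j < k ∧ k < c), F c j k
      = ∑ a : Fin n, ∑ b ∈ univ.filter (fun b => a < b),
          ∑ c ∈ univ.filter (fun c => b < c), F c a b := by
    rw [Finset.sum_comm' (t' := (univ : Finset (Fin n)))
      (s' := fun j => univ.filter (fun c => j < c))]
    · refine Finset.sum_congr rfl fun j _ => ?_
      rw [Finset.sum_comm' (t' := univ.filter (fun k => j < k))
        (s' := fun k => univ.filter (fun c => k < c))]
      intro c k
      simp only [Finset.mem_filter, Finset.mem_univ, true_and]
      constructor
      · rintro ⟨h1, h2, h3⟩; exact ⟨h3, h2⟩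
      · rintro ⟨h1, h2⟩; exact ⟨h2.trans h1, h2, h1⟩
    · intro x y
      simp only [Finset.mem_filter, Finset.mem_univ, true_and, and_true]
  rw [hT2, hT3, ← Finset.sum_add_distrib, ← Finset.sum_add_distrib]
  refine Finset.sum_congr rfl fun a _ => ?_
  rw [← Finset.sum_add_distrib, ← Finset.sum_add_distrib]
  refine Finset.sum_congr rfl fun b _ => ?_
  rw [← Finset.sum_add_distrib, ← Finset.sum_add_distrib]
  exact Finset.sum_congr rfl fun c _ => by ring
end Comb


section Flatten
variable {n : ℕ}

lemma pair_flatten (P : Fin n → Fin n → Prop) [∀ i j, Decidable (P i j)]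
    (g : Fin n → Fin n → ℝ) :
    ∑ i : Fin n, ∑ j ∈ univ.filter (fun j => P i j), g i j
      = ∑ q ∈ univ.filter (fun q : Fin n × Fin n => P q.1 q.2), g q.1 q.2 := by
  rw [Finset.sum_filter, Fintype.sum_prod_type]
  exact Finset.sum_congr rfl fun i _ => (Finset.sum_filter _ _)

lemma triple_flatten (P1 : Fin n → Fin n → Prop) (P2 : Fin n → Fin n → Fin n → Prop)
    [∀ i j, Decidable (P1 i j)] [∀ i j k, Decidable (P2 i j k)]
    (g : Fin n → Fin n → Fin n → ℝ) :
    ∑ i : Fin n, ∑ j ∈ univ.filter (fun j => P1 i j), ∑ k ∈ univ.filter (fun k => P2 i j k), g i j k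
      = ∑ q ∈ univ.filter (fun q : Fin n × Fin n × Fin n => P1 q.1 q.2.1 ∧ P2 q.1 q.2.1 q.2.2),
          g q.1 q.2.1 q.2.2 := by
  rw [Finset.sum_filter, Fintype.sum_prod_type]
  refine Finset.sum_congr rfl fun i _ => ?_
  rw [Fintype.sum_prod_type, Finset.sum_filter]
  refine Finset.sum_congr rfl fun j _ => ?_
  by_cases h : P1 i j
  · rw [if_pos h, Finset.sum_filter]
    refine Finset.sum_congr rfl fun k _ => ?_
    by_cases h2 : P2 i j k
    · rw [if_pos h2, if_pos ⟨h, h2⟩]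
    · rw [if_neg h2, if_neg (fun hc => h2 hc.2)]
  · rw [if_neg h]
    exact (Finset.sum_eq_zero fun k _ => if_neg (fun hc => h hc.1)).symm
end Flatten

section Bdd
variable {Ω : Type*} [MeasurableSpace Ω] {μ : Measure Ω}

/-- measurable and uniformly bounded -/
def BddM (μ : Measure Ω) (f : Ω → ℝ) : Prop := Measurable f ∧ ∃ C, ∀ ω, |f ω| ≤ C

lemma BddM.const (c : ℝ) : BddM μ (fun _ => c) :=
  ⟨measurable_const, ⟨|c|, fun _ => le_rfl⟩⟩

lemma BddM.add {f g : Ω → ℝ} (hf : BddM μ f) (hg : BddM μ g) :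
    BddM μ (fun ω => f ω + g ω) := by
  obtain ⟨hfm, C, hC⟩ := hf
  obtain ⟨hgm, D, hD⟩ := hg
  exact ⟨hfm.add hgm, ⟨C + D, fun ω => (abs_add_le _ _).trans (add_le_add (hC ω) (hD ω))⟩⟩

lemma BddM.mul {f g : Ω → ℝ} (hf : BddM μ f) (hg : BddM μ g) :
    BddM μ (fun ω => f ω * g ω) := by
  obtain ⟨hfm, C, hC⟩ := hf
  obtain ⟨hgm, D, hD⟩ := hg
  refine ⟨hfm.mul hgm, ⟨max C 0 * max D 0, fun ω => ?_⟩⟩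
  rw [abs_mul]
  exact mul_le_mul ((hC ω).trans (le_max_left _ _)) ((hD ω).trans (le_max_left _ _))
    (abs_nonneg _) (le_max_right _ _)

lemma BddM.sub {f g : Ω → ℝ} (hf : BddM μ f) (hg : BddM μ g) :
    BddM μ (fun ω => f ω - g ω) := by
  obtain ⟨hfm, C, hC⟩ := hf
  obtain ⟨hgm, D, hD⟩ := hg
  exact ⟨hfm.sub hgm, ⟨C + D, fun ω => (abs_sub _ _).trans (add_le_add (hC ω) (hD ω))⟩⟩

lemma BddM.sum {ι : Type*} (s : Finset ι) (f : ι → Ω → ℝ)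
    (h : ∀ i ∈ s, BddM μ (f i)) : BddM μ (fun ω => ∑ i ∈ s, f i ω) := by
  classical
  induction s using Finset.induction_on with
  | empty => simpa using BddM.const 0
  | @insert a s ha ih =>
      have h1 : BddM μ (fun ω => f a ω + ∑ i ∈ s, f i ω) :=
        (h a (Finset.mem_insert_self a s)).add
          (ih fun i hi => h i (Finset.mem_insert_of_mem hi))
      simpa [Finset.sum_insert ha] using h1

lemma BddM.prod {ι : Type*} (s : Finset ι) (f : ι → Ω → ℝ)
    (h : ∀ i ∈ s, BddM μ (f i)) : BddM μ (fun ω => ∏ i ∈ s, f i ω) := by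
  classical
  induction s using Finset.induction_on with
  | empty => simpa using BddM.const 1
  | @insert a s ha ih =>
      have h1 : BddM μ (fun ω => f a ω * ∏ i ∈ s, f i ω) :=
        (h a (Finset.mem_insert_self a s)).mul
          (ih fun i hi => h i (Finset.mem_insert_of_mem hi))
      simpa [Finset.prod_insert ha] using h1

lemma BddM.integrable [IsProbabilityMeasure μ] {f : Ω → ℝ} (hf : BddM μ f) :
    Integrable f μ := by
  obtain ⟨hm, C, hC⟩ := hf
  refine memLp_one_iff_integrable.mp ?_
  exact MemLp.of_bound hm.aestronglyMeasurable C
    (Filter.Eventually.of_forall fun ω => by simpa [Real.norm_eq_abs] using hC ω)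

lemma BddM.memℒp2 [IsProbabilityMeasure μ] {f : Ω → ℝ} (hf : BddM μ f) :
    MemLp f 2 μ := by
  obtain ⟨hm, C, hC⟩ := hf
  exact MemLp.of_bound hm.aestronglyMeasurable C
    (Filter.Eventually.of_forall fun ω => by simpa [Real.norm_eq_abs] using hC ω)
end Bdd


section BddExtra
variable {Ω : Type*} [MeasurableSpace Ω] {μ : Measure Ω}
lemma BddM.sq {f : Ω → ℝ} (hf : BddM μ f) : BddM μ (fun ω => (f ω) ^ 2) := by
  simpa [pow_two] using hf.mul hf
end BddExtra




section Prob
variable {Ω : Type*} [MeasurableSpace Ω] {μ : Measure Ω} [IsProbabilityMeasure μ]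
  {n : ℕ} {Y : Fin n → Fin n → Ω → ℝ} {p : Fin n → Fin n → ℝ}

/-- centered edge variables -/
def Xc (Y : Fin n → Fin n → Ω → ℝ) (p : Fin n → Fin n → ℝ)
    (e : {e : Fin n × Fin n // e.1 < e.2}) : Ω → ℝ :=
  fun ω => Y e.1.1 e.1.2 ω - p e.1.1 e.1.2

variable (hmeas : ∀ i j, Measurable (Y i j))
  (h01 : ∀ i j ω, Y i j ω = 0 ∨ Y i j ω = 1)
  (hmean : ∀ i j, i ≠ j → ∫ ω, Y i j ω ∂μ = p i j)
  (hindep : iIndepFun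
      (fun e : {e : Fin n × Fin n // e.1 < e.2} => Y e.1.1 e.1.2) μ)

include hmeas in
lemma Xc_meas (e : {e : Fin n × Fin n // e.1 < e.2}) : Measurable (Xc Y p e) :=
  (hmeas e.1.1 e.1.2).sub measurable_const

include hmeas h01 in
lemma Xc_bdd (e : {e : Fin n × Fin n // e.1 < e.2}) : BddM μ (Xc Y p e) := by
  refine ⟨Xc_meas hmeas e, ⟨1 + |p e.1.1 e.1.2|, fun ω => ?_⟩⟩
  have := abs_sub (Y e.1.1 e.1.2 ω) (p e.1.1 e.1.2)
  refine (abs_sub _ _).trans (add_le_add ?_ le_rfl)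
  rcases h01 e.1.1 e.1.2 ω with h | h <;> simp [h]

include hmeas h01 hmean in
lemma Xc_int_zero (e : {e : Fin n × Fin n // e.1 < e.2}) :
    ∫ ω, Xc Y p e ω ∂μ = 0 := by
  have hY : Integrable (Y e.1.1 e.1.2) μ := by
    refine BddM.integrable ⟨hmeas e.1.1 e.1.2, ⟨1, fun ω => ?_⟩⟩
    rcases h01 e.1.1 e.1.2 ω with h | h <;> simp [h]
  rw [show (fun ω => Xc Y p e ω) = fun ω => Y e.1.1 e.1.2 ω - p e.1.1 e.1.2 from rfl]
  rw [integral_sub hY (integrable_const _), integral_const]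
  simp [hmean e.1.1 e.1.2 (ne_of_lt e.2)]

include hindep in
lemma Xc_indep : iIndepFun (Xc Y p) μ := by
  have := hindep.comp (fun e (x : ℝ) => x - p e.1.1 e.1.2)
    (fun e => measurable_id.sub measurable_const)
  exact this

include hmeas h01 hindep in
lemma int_prod_Xc (s : Finset {e : Fin n × Fin n // e.1 < e.2}) (hmean' : ∀ e ∈ s, ∫ ω, Xc Y p e ω ∂μ = 0) :
    ∫ ω, ∏ e ∈ s, Xc Y p e ω ∂μ = if s = ∅ then 1 else 0 := by
  classical
  induction s using Finset.induction_on with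
  | empty => simp
  | @insert a s ha ih =>
      have hprod_int : Integrable (∏ e ∈ s, Xc Y p e) μ := by
        have := BddM.prod (μ := μ) s (Xc Y p) (fun e _ => Xc_bdd hmeas h01 e)
        have h2 : (fun ω => ∏ e ∈ s, Xc Y p e ω) = ∏ e ∈ s, Xc Y p e := by
          funext ω; rw [Finset.prod_apply]
        rw [← h2]
        exact this.integrable
      have hindep2 : IndepFun (Xc Y p a) (∏ e ∈ s, Xc Y p e) μ :=
        ((Xc_indep hindep).indepFun_finsetProd_of_notMem (Xc_meas hmeas) ha).symm
      have key : ∫ ω, Xc Y p a ω * ∏ e ∈ s, Xc Y p e ω ∂μ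
          = (∫ ω, Xc Y p a ω ∂μ) * ∫ ω, ∏ e ∈ s, Xc Y p e ω ∂μ := by
        have h2 : (fun ω => ∏ e ∈ s, Xc Y p e ω) = ∏ e ∈ s, Xc Y p e := by
          funext ω; rw [Finset.prod_apply]
        have hfe : (fun ω => Xc Y p a ω * ∏ e ∈ s, Xc Y p e ω)
            = Xc Y p a * ∏ e ∈ s, Xc Y p e := by
          funext ω; rw [Pi.mul_apply, Finset.prod_apply]
        show integral μ (fun ω => Xc Y p a ω * ∏ e ∈ s, Xc Y p e ω) = _
        rw [hfe, h2]
        exact hindep2.integral_mul_eq_mul_integral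
          (BddM.integrable (Xc_bdd hmeas h01 a)).aestronglyMeasurable hprod_int.aestronglyMeasurable
      rw [show (fun ω => ∏ e ∈ insert a s, Xc Y p e ω)
          = fun ω => Xc Y p a ω * ∏ e ∈ s, Xc Y p e ω from
        funext fun ω => Finset.prod_insert ha]
      rw [key, hmean' a (Finset.mem_insert_self a s), zero_mul,
        if_neg (Finset.insert_ne_empty a s)]
end Prob

section Prob2
variable {Ω : Type*} [MeasurableSpace Ω] {μ : Measure Ω} [IsProbabilityMeasure μ]
  {n : ℕ} {Y : Fin n → Fin n → Ω → ℝ} {p : Fin n → Fin n → ℝ}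

variable (hmeas : ∀ i j, Measurable (Y i j))
  (h01 : ∀ i j ω, Y i j ω = 0 ∨ Y i j ω = 1)
  (hmean : ∀ i j, i ≠ j → ∫ ω, Y i j ω ∂μ = p i j)
  (hindep : iIndepFun
      (fun e : {e : Fin n × Fin n // e.1 < e.2} => Y e.1.1 e.1.2) μ)

include h01 in
lemma Xc_sq (e : {e : Fin n × Fin n // e.1 < e.2}) (ω : Ω) :
    (Xc Y p e ω)^2 = p e.1.1 e.1.2 * (1 - p e.1.1 e.1.2)
      + (1 - 2 * p e.1.1 e.1.2) * Xc Y p e ω := by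
  rcases h01 e.1.1 e.1.2 ω with h | h <;> simp only [Xc, h] <;> ring

include hmeas h01 hmean hindep in
lemma int_sq_prod (e : {e : Fin n × Fin n // e.1 < e.2})
    (s : Finset {e : Fin n × Fin n // e.1 < e.2}) (he : e ∉ s) :
    ∫ ω, (Xc Y p e ω)^2 * ∏ f ∈ s, Xc Y p f ω ∂μ
      = p e.1.1 e.1.2 * (1 - p e.1.1 e.1.2) * (if s = ∅ then 1 else 0) := by
  have hb : ∀ g, BddM μ (Xc Y p g) := Xc_bdd hmeas h01
  have hrw : (fun ω => (Xc Y p e ω)^2 * ∏ f ∈ s, Xc Y p f ω)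
      = fun ω => (p e.1.1 e.1.2 * (1 - p e.1.1 e.1.2)) * (∏ f ∈ s, Xc Y p f ω)
        + (1 - 2 * p e.1.1 e.1.2) * (∏ f ∈ insert e s, Xc Y p f ω) := by
    funext ω
    rw [Finset.prod_insert he, Xc_sq h01 e ω]
    ring
  rw [hrw, integral_add, integral_const_mul, integral_const_mul,
    int_prod_Xc hmeas h01 hindep s (fun f _ => Xc_int_zero hmeas h01 hmean f),
    int_prod_Xc hmeas h01 hindep (insert e s) (fun f _ => Xc_int_zero hmeas h01 hmean f),
    if_neg (Finset.insert_ne_empty e s), mul_zero, add_zero]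
  · exact ((BddM.const _).mul (BddM.prod s _ (fun g _ => hb g))).integrable
  · exact ((BddM.const _).mul (BddM.prod (insert e s) _ (fun g _ => hb g))).integrable

include hmeas h01 hmean hindep in
lemma int_sqsq (e f : {e : Fin n × Fin n // e.1 < e.2}) (hef : e ≠ f) :
    ∫ ω, (Xc Y p e ω)^2 * (Xc Y p f ω)^2 ∂μ
      = (p e.1.1 e.1.2 * (1 - p e.1.1 e.1.2)) * (p f.1.1 f.1.2 * (1 - p f.1.1 f.1.2)) := by
  have hb : ∀ g, BddM μ (Xc Y p g) := Xc_bdd hmeas h01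
  have hrw : (fun ω => (Xc Y p e ω)^2 * (Xc Y p f ω)^2)
      = fun ω => (p f.1.1 f.1.2 * (1 - p f.1.1 f.1.2))
            * ((Xc Y p e ω)^2 * ∏ g ∈ (∅ : Finset _), Xc Y p g ω)
          + (1 - 2 * p f.1.1 f.1.2)
            * ((Xc Y p e ω)^2 * ∏ g ∈ ({f} : Finset _), Xc Y p g ω) := by
    funext ω
    rw [Finset.prod_singleton, Finset.prod_empty, Xc_sq h01 f ω]
    ring
  rw [hrw, integral_add, integral_const_mul, integral_const_mul,
    int_sq_prod hmeas h01 hmean hindep e ∅ (Finset.notMem_empty e),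
    int_sq_prod hmeas h01 hmean hindep e {f} (by simp [hef]),
    if_pos rfl, if_neg (by simp)]
  · ring
  · exact ((BddM.const _).mul ((hb e).sq.mul
      (BddM.prod ∅ _ (fun g _ => hb g)))).integrable
  · exact ((BddM.const _).mul ((hb e).sq.mul
      (BddM.prod {f} _ (fun g _ => hb g)))).integrable
end Prob2

section Prob3
variable {Ω : Type*} [MeasurableSpace Ω] {μ : Measure Ω} [IsProbabilityMeasure μ]
  {n : ℕ} {Y : Fin n → Fin n → Ω → ℝ} {p : Fin n → Fin n → ℝ}

variable (hmeas : ∀ i j, Measurable (Y i j))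
  (h01 : ∀ i j ω, Y i j ω = 0 ∨ Y i j ω = 1)
  (hmean : ∀ i j, i ≠ j → ∫ ω, Y i j ω ∂μ = p i j)
  (hindep : iIndepFun
      (fun e : {e : Fin n × Fin n // e.1 < e.2} => Y e.1.1 e.1.2) μ)

lemma edge_ne {i j k l : Fin n} (hij : i < j) (hkl : k < l) (h : (i,j) ≠ (k,l)) :
    (⟨(i,j),hij⟩ : {e : Fin n × Fin n // e.1 < e.2}) ≠ ⟨(k,l),hkl⟩ :=
  fun hc => h (congrArg Subtype.val hc)

include hmeas h01 hmean in
lemma m1 {i j : Fin n} (hij : i < j) : ∫ ω, (Y i j ω - p i j) ∂μ = 0 :=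
  Xc_int_zero hmeas h01 hmean ⟨(i,j),hij⟩

include hmeas h01 hmean hindep in
lemma m2 {i j k l : Fin n} (hij : i < j) (hkl : k < l) :
    ∫ ω, (Y i j ω - p i j) * (Y k l ω - p k l) ∂μ
      = if (i,j) = (k,l) then p i j * (1 - p i j) else 0 := by
  by_cases h : (i,j) = (k,l)
  · rw [if_pos h]
    obtain ⟨hik, hjl⟩ := Prod.mk.injEq .. ▸ h
    subst hik; subst hjl
    have heq : (fun ω => (Y i j ω - p i j) * (Y i j ω - p i j))
        = fun ω => (Xc Y p ⟨(i,j),hij⟩ ω)^2 * ∏ f ∈ (∅ : Finset _), Xc Y p f ω := by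
      funext ω; simp only [Xc, Finset.prod_empty]; ring
    rw [heq, int_sq_prod hmeas h01 hmean hindep _ ∅ (Finset.notMem_empty _), if_pos rfl,
      mul_one]
  · rw [if_neg h]
    have hne := edge_ne hij hkl h
    have heq : (fun ω => (Y i j ω - p i j) * (Y k l ω - p k l))
        = fun ω => ∏ f ∈ ({⟨(i,j),hij⟩, ⟨(k,l),hkl⟩} : Finset _), Xc Y p f ω := by
      funext ω; rw [Finset.prod_pair hne]; simp only [Xc]
    rw [heq, int_prod_Xc hmeas h01 hindep _ (fun f _ => Xc_int_zero hmeas h01 hmean f),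
      if_neg (Finset.insert_ne_empty _ _)]

include hmeas h01 hmean hindep in
lemma m3 {i j k l g h : Fin n} (hij : i < j) (hkl : k < l) (hgh : g < h)
    (hne : (k,l) ≠ (g,h)) :
    ∫ ω, (Y i j ω - p i j) * ((Y k l ω - p k l) * (Y g h ω - p g h)) ∂μ = 0 := by
  have hne' := edge_ne hkl hgh hne
  by_cases h1 : (i,j) = (k,l)
  · obtain ⟨hik, hjl⟩ := Prod.mk.injEq .. ▸ h1
    subst hik; subst hjl
    have heq : (fun ω => (Y i j ω - p i j) * ((Y i j ω - p i j) * (Y g h ω - p g h)))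
        = fun ω => (Xc Y p ⟨(i,j),hij⟩ ω)^2
            * ∏ f ∈ ({⟨(g,h),hgh⟩} : Finset _), Xc Y p f ω := by
      funext ω; rw [Finset.prod_singleton]; simp only [Xc]; ring
    rw [heq, int_sq_prod hmeas h01 hmean hindep _ _ (by simp [edge_ne hij hgh (h1 ▸ hne)]),
      if_neg (by simp), mul_zero]
  · by_cases h2 : (i,j) = (g,h)
    · obtain ⟨hik, hjl⟩ := Prod.mk.injEq .. ▸ h2
      subst hik; subst hjl
      have heq : (fun ω => (Y i j ω - p i j) * ((Y k l ω - p k l) * (Y i j ω - p i j)))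
          = fun ω => (Xc Y p ⟨(i,j),hij⟩ ω)^2
              * ∏ f ∈ ({⟨(k,l),hkl⟩} : Finset _), Xc Y p f ω := by
        funext ω; rw [Finset.prod_singleton]; simp only [Xc]; ring
      rw [heq, int_sq_prod hmeas h01 hmean hindep _ _ (by simp [edge_ne hij hkl h1]),
        if_neg (by simp), mul_zero]
    · have e12 := edge_ne hij hkl h1
      have e13 := edge_ne hij hgh h2
      have heq : (fun ω => (Y i j ω - p i j) * ((Y k l ω - p k l) * (Y g h ω - p g h)))
          = fun ω => ∏ f ∈ ({⟨(i,j),hij⟩, ⟨(k,l),hkl⟩, ⟨(g,h),hgh⟩} : Finset _),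
              Xc Y p f ω := by
        funext ω
        rw [Finset.prod_insert (by simp [e12, e13]), Finset.prod_pair hne']
        simp only [Xc]
      rw [heq, int_prod_Xc hmeas h01 hindep _ (fun f _ => Xc_int_zero hmeas h01 hmean f),
        if_neg (Finset.insert_ne_empty _ _)]
end Prob3

section Prob4
variable {Ω : Type*} [MeasurableSpace Ω] {μ : Measure Ω} [IsProbabilityMeasure μ]
  {n : ℕ} {Y : Fin n → Fin n → Ω → ℝ} {p : Fin n → Fin n → ℝ}

variable (hmeas : ∀ i j, Measurable (Y i j))
  (h01 : ∀ i j ω, Y i j ω = 0 ∨ Y i j ω = 1)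
  (hmean : ∀ i j, i ≠ j → ∫ ω, Y i j ω ∂μ = p i j)
  (hindep : iIndepFun
      (fun e : {e : Fin n × Fin n // e.1 < e.2} => Y e.1.1 e.1.2) μ)

include hmeas h01 hmean hindep in
lemma m4 {i j k l g h u v : Fin n} (hij : i < j) (hkl : k < l) (hgh : g < h) (huv : u < v)
    (h1 : (i,j) ≠ (k,l)) (h2 : (g,h) ≠ (u,v)) :
    ∫ ω, (Y i j ω - p i j) * (Y k l ω - p k l) * ((Y g h ω - p g h) * (Y u v ω - p u v)) ∂μ
      = if ((i,j) = (g,h) ∧ (k,l) = (u,v)) ∨ ((i,j) = (u,v) ∧ (k,l) = (g,h))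
        then (p i j * (1 - p i j)) * (p k l * (1 - p k l)) else 0 := by
  by_cases hA : (i,j) = (g,h) ∧ (k,l) = (u,v)
  · rw [if_pos (Or.inl hA)]
    obtain ⟨hA1, hA2⟩ := hA
    obtain ⟨e1, e2⟩ := Prod.mk.injEq .. ▸ hA1
    obtain ⟨e3, e4⟩ := Prod.mk.injEq .. ▸ hA2
    subst e1; subst e2; subst e3; subst e4
    have heq : (fun ω => (Y i j ω - p i j) * (Y k l ω - p k l)
          * ((Y i j ω - p i j) * (Y k l ω - p k l)))
        = fun ω => (Xc Y p ⟨(i,j),hij⟩ ω)^2 * (Xc Y p ⟨(k,l),hkl⟩ ω)^2 := by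
      funext ω; simp only [Xc]; ring
    rw [heq, int_sqsq hmeas h01 hmean hindep _ _ (edge_ne hij hkl h1)]
  · by_cases hB : (i,j) = (u,v) ∧ (k,l) = (g,h)
    · rw [if_pos (Or.inr hB)]
      obtain ⟨hB1, hB2⟩ := hB
      obtain ⟨e1, e2⟩ := Prod.mk.injEq .. ▸ hB1
      obtain ⟨e3, e4⟩ := Prod.mk.injEq .. ▸ hB2
      subst e1; subst e2; subst e3; subst e4
      have heq : (fun ω => (Y i j ω - p i j) * (Y k l ω - p k l)
            * ((Y k l ω - p k l) * (Y i j ω - p i j)))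
          = fun ω => (Xc Y p ⟨(i,j),hij⟩ ω)^2 * (Xc Y p ⟨(k,l),hkl⟩ ω)^2 := by
        funext ω; simp only [Xc]; ring
      rw [heq, int_sqsq hmeas h01 hmean hindep _ _ (edge_ne hij hkl h1)]
    · rw [if_neg (by tauto)]
      by_cases c1 : (i,j) = (g,h)
      · -- shared edge (i,j)=(g,h); remaining (k,l) ≠ (u,v)
        obtain ⟨e1, e2⟩ := Prod.mk.injEq .. ▸ c1
        subst e1; subst e2
        have hklu : (k,l) ≠ (u,v) := fun hc => hA ⟨rfl, hc⟩
        have hiju : (i,j) ≠ (u,v) := fun hc => h2 hc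
        have heq : (fun ω => (Y i j ω - p i j) * (Y k l ω - p k l)
              * ((Y i j ω - p i j) * (Y u v ω - p u v)))
            = fun ω => (Xc Y p ⟨(i,j),hij⟩ ω)^2
                * ∏ f ∈ ({⟨(k,l),hkl⟩, ⟨(u,v),huv⟩} : Finset _), Xc Y p f ω := by
          funext ω
          rw [Finset.prod_pair (edge_ne hkl huv hklu)]; simp only [Xc]; ring
        rw [heq, int_sq_prod hmeas h01 hmean hindep _ _
            (by simp [edge_ne hij hkl h1, edge_ne hij huv hiju]),
          if_neg (Finset.insert_ne_empty _ _), mul_zero]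
      · by_cases c2 : (i,j) = (u,v)
        · obtain ⟨e1, e2⟩ := Prod.mk.injEq .. ▸ c2
          subst e1; subst e2
          have hklg : (k,l) ≠ (g,h) := fun hc => hB ⟨rfl, hc⟩
          have heq : (fun ω => (Y i j ω - p i j) * (Y k l ω - p k l)
                * ((Y g h ω - p g h) * (Y i j ω - p i j)))
              = fun ω => (Xc Y p ⟨(i,j),hij⟩ ω)^2
                  * ∏ f ∈ ({⟨(k,l),hkl⟩, ⟨(g,h),hgh⟩} : Finset _), Xc Y p f ω := by
            funext ω
            rw [Finset.prod_pair (edge_ne hkl hgh hklg)]; simp only [Xc]; ring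
          rw [heq, int_sq_prod hmeas h01 hmean hindep _ _
              (by simp [edge_ne hij hkl h1, edge_ne hij hgh c1]),
            if_neg (Finset.insert_ne_empty _ _), mul_zero]
        · by_cases c3 : (k,l) = (g,h)
          · obtain ⟨e1, e2⟩ := Prod.mk.injEq .. ▸ c3
            subst e1; subst e2
            have hklu : (k,l) ≠ (u,v) := fun hc => h2 hc
            have heq : (fun ω => (Y i j ω - p i j) * (Y k l ω - p k l)
                  * ((Y k l ω - p k l) * (Y u v ω - p u v)))
                = fun ω => (Xc Y p ⟨(k,l),hkl⟩ ω)^2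
                    * ∏ f ∈ ({⟨(i,j),hij⟩, ⟨(u,v),huv⟩} : Finset _), Xc Y p f ω := by
              funext ω
              rw [Finset.prod_pair (edge_ne hij huv c2)]; simp only [Xc]; ring
            rw [heq, int_sq_prod hmeas h01 hmean hindep _ _
                (by simp [(edge_ne hij hkl h1).symm, edge_ne hkl huv hklu]),
              if_neg (Finset.insert_ne_empty _ _), mul_zero]
          · by_cases c4 : (k,l) = (u,v)
            · obtain ⟨e1, e2⟩ := Prod.mk.injEq .. ▸ c4
              subst e1; subst e2
              have heq : (fun ω => (Y i j ω - p i j) * (Y k l ω - p k l)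
                    * ((Y g h ω - p g h) * (Y k l ω - p k l)))
                  = fun ω => (Xc Y p ⟨(k,l),hkl⟩ ω)^2
                      * ∏ f ∈ ({⟨(i,j),hij⟩, ⟨(g,h),hgh⟩} : Finset _), Xc Y p f ω := by
                funext ω
                rw [Finset.prod_pair (edge_ne hij hgh c1)]; simp only [Xc]; ring
              rw [heq, int_sq_prod hmeas h01 hmean hindep _ _
                  (by simp [(edge_ne hij hkl h1).symm, edge_ne hkl hgh c3]),
                if_neg (Finset.insert_ne_empty _ _), mul_zero]
            · have heq : (fun ω => (Y i j ω - p i j) * (Y k l ω - p k l)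
                    * ((Y g h ω - p g h) * (Y u v ω - p u v)))
                  = fun ω => ∏ f ∈ ({⟨(i,j),hij⟩, ⟨(k,l),hkl⟩, ⟨(g,h),hgh⟩,
                      ⟨(u,v),huv⟩} : Finset _), Xc Y p f ω := by
                funext ω
                rw [Finset.prod_insert (by
                    simp [edge_ne hij hkl h1, edge_ne hij hgh c1, edge_ne hij huv c2]),
                  Finset.prod_insert (by
                    simp [edge_ne hkl hgh c3, edge_ne hkl huv c4]),
                  Finset.prod_pair (edge_ne hgh huv h2)]
                simp only [Xc]; ring
              rw [heq, int_prod_Xc hmeas h01 hindep _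
                  (fun f _ => Xc_int_zero hmeas h01 hmean f),
                if_neg (Finset.insert_ne_empty _ _)]
end Prob4




/-- Variance of the degree mean square statistic `W` under HER(p). -/
theorem her_degree_mean_square_variance
    {Ω : Type*} [MeasurableSpace Ω] (μ : Measure Ω) [IsProbabilityMeasure μ]
    (n : ℕ) (Y : Fin n → Fin n → Ω → ℝ) (p p0 : Fin n → Fin n → ℝ)
    (hYsym : ∀ i j, Y i j = Y j i) (hYdiag : ∀ i, Y i i = 0)
    (hpsym : ∀ i j, p i j = p j i) (hpdiag : ∀ i, p i i = 0)
    (hp0sym : ∀ i j, p0 i j = p0 j i) (hp0diag : ∀ i, p0 i i = 0)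
    (hmeas : ∀ i j, Measurable (Y i j))
    (h01 : ∀ i j ω, Y i j ω = 0 ∨ Y i j ω = 1)
    (hmean : ∀ i j, i ≠ j → ∫ ω, Y i j ω ∂μ = p i j)
    (hindep : iIndepFun
      (fun e : {e : Fin n × Fin n // e.1 < e.2} => Y e.1.1 e.1.2) μ) :
    variance (fun ω => (1 / (n : ℝ)) * ∑ i,
        ((∑ j ∈ univ.filter (fun j => j ≠ i), Y i j ω)
          - ∑ j ∈ univ.filter (fun j => j ≠ i), p0 i j) ^ 2) μ
    = (4 / (n : ℝ) ^ 2) *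
      ((∑ i, ∑ j ∈ univ.filter (fun j => i < j),
          p i j * (1 - p i j) *
            (1 - 2 * p i j + (∑ k ∈ univ.filter (fun k => k ≠ i), (p i k - p0 i k))
              + (∑ k ∈ univ.filter (fun k => k ≠ j), (p j k - p0 j k))) ^ 2)
      + ∑ i, ∑ j ∈ univ.filter (fun j => i < j), ∑ k ∈ univ.filter (fun k => j < k),
          (p i j * (1 - p i j) * (p i k * (1 - p i k))
            + p i j * (1 - p i j) * (p j k * (1 - p j k))
            + p i k * (1 - p i k) * (p j k * (1 - p j k)))) := by
  classical
  set Z : Fin n → Fin n → Ω → ℝ := fun i j ω => Y i j ω - p i j with hZ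
  set Δ : Fin n → ℝ := fun i => ∑ k ∈ univ.filter (fun k => k ≠ i), (p i k - p0 i k) with hΔ
  set σ2 : Fin n → Fin n → ℝ := fun i j => p i j * (1 - p i j) with hσ2
  set aa : Fin n → Fin n → ℝ := fun i j => 1 - 2 * p i j + Δ i + Δ j with haa
  set PA : Finset (Fin n × Fin n) := univ.filter (fun q : Fin n × Fin n => q.1 < q.2) with hPA
  set PB : Finset (Fin n × Fin n × Fin n) :=
    univ.filter (fun t : Fin n × Fin n × Fin n => t.1 < t.2.1 ∧ t.2.1 < t.2.2) with hPB
  set A : Ω → ℝ := fun ω => ∑ q ∈ PA, (2 * aa q.1 q.2) * Z q.1 q.2 ω with hA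
  set B : Ω → ℝ := fun ω => ∑ t ∈ PB,
      2 * (Z t.1 t.2.1 ω * Z t.1 t.2.2 ω + Z t.1 t.2.1 ω * Z t.2.1 t.2.2 ω
        + Z t.1 t.2.2 ω * Z t.2.1 t.2.2 ω) with hB
  set C : ℝ := (∑ i, Δ i ^ 2) + 2 * ∑ q ∈ PA, σ2 q.1 q.2 with hC
  -- pointwise identity
  have hzsym : ∀ i j ω, Z j i ω = Z i j ω := by
    intro i j ω
    simp only [hZ]
    rw [hYsym j i, hpsym j i]
  have hpt : ∀ ω, (∑ i, ((∑ j ∈ univ.filter (fun j => j ≠ i), Y i j ω)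
        - ∑ j ∈ univ.filter (fun j => j ≠ i), p0 i j) ^ 2) = C + (A ω + B ω) := by
    intro ω
    have hz2 : ∀ i j, Z i j ω ^ 2 = σ2 i j + (1 - 2 * p i j) * Z i j ω := by
      intro i j
      rcases h01 i j ω with h | h <;> simp only [hZ, hσ2, h] <;> ring
    have step1 : ∀ i, ((∑ j ∈ univ.filter (fun j => j ≠ i), Y i j ω)
          - ∑ j ∈ univ.filter (fun j => j ≠ i), p0 i j)
        = (∑ j ∈ univ.filter (fun j => j ≠ i), Z i j ω) + Δ i := by
      intro i
      simp only [hZ, hΔ]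
      rw [← Finset.sum_sub_distrib, ← Finset.sum_add_distrib]
      exact Finset.sum_congr rfl fun j _ => by ring
    have expand : ∀ i, ((∑ j ∈ univ.filter (fun j => j ≠ i), Z i j ω) + Δ i) ^ 2
        = (∑ j ∈ univ.filter (fun j => j ≠ i),
            (σ2 i j + (1 - 2 * p i j) * Z i j ω + 2 * Δ i * Z i j ω)) + Δ i ^ 2
          + 2 * ∑ j ∈ univ.filter (fun j => j ≠ i),
              ∑ k ∈ (univ.filter (fun k => k ≠ i)).filter (fun k => j < k),
                Z i j ω * Z i k ω := by
      intro i
      have e1 : ((∑ j ∈ univ.filter (fun j => j ≠ i), Z i j ω) + Δ i) ^ 2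
          = (∑ j ∈ univ.filter (fun j => j ≠ i), Z i j ω) ^ 2
            + 2 * Δ i * (∑ j ∈ univ.filter (fun j => j ≠ i), Z i j ω) + Δ i ^ 2 := by ring
      rw [e1, sq_sum_eq]
      have e2 : ∑ j ∈ univ.filter (fun j => j ≠ i), Z i j ω ^ 2
          = ∑ j ∈ univ.filter (fun j => j ≠ i), (σ2 i j + (1 - 2 * p i j) * Z i j ω) :=
        Finset.sum_congr rfl fun j _ => hz2 i j
      have e3 : ∑ j ∈ univ.filter (fun j => j ≠ i),
            (σ2 i j + (1 - 2 * p i j) * Z i j ω + 2 * Δ i * Z i j ω)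
          = (∑ j ∈ univ.filter (fun j => j ≠ i), (σ2 i j + (1 - 2 * p i j) * Z i j ω))
            + 2 * Δ i * (∑ j ∈ univ.filter (fun j => j ≠ i), Z i j ω) := by
        rw [Finset.sum_add_distrib]
        congr 1
        exact (Finset.mul_sum _ _ _).symm
      rw [e2, e3]
      ring
    calc ∑ i, ((∑ j ∈ univ.filter (fun j => j ≠ i), Y i j ω)
          - ∑ j ∈ univ.filter (fun j => j ≠ i), p0 i j) ^ 2
        = ∑ i, (((∑ j ∈ univ.filter (fun j => j ≠ i), Z i j ω) + Δ i) ^ 2) :=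
          Finset.sum_congr rfl fun i _ => by rw [step1 i]
      _ = (∑ i, ∑ j ∈ univ.filter (fun j => j ≠ i),
            (σ2 i j + (1 - 2 * p i j) * Z i j ω + 2 * Δ i * Z i j ω))
          + (∑ i, Δ i ^ 2)
          + 2 * ∑ i, ∑ j ∈ univ.filter (fun j => j ≠ i),
              ∑ k ∈ (univ.filter (fun k => k ≠ i)).filter (fun k => j < k),
                Z i j ω * Z i k ω := by
          rw [Finset.sum_congr rfl fun i _ => expand i]
          rw [Finset.sum_add_distrib, Finset.sum_add_distrib]
          congr 1
          exact (Finset.mul_sum _ _ _).symm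
      _ = C + (A ω + B ω) := by
          have hTa : (∑ i, ∑ j ∈ univ.filter (fun j => j ≠ i),
              (σ2 i j + (1 - 2 * p i j) * Z i j ω + 2 * Δ i * Z i j ω))
            = 2 * (∑ q ∈ PA, σ2 q.1 q.2) + A ω := by
            rw [sum_ne_eq_sum_lt]
            have e4 : ∀ i, ∀ j ∈ univ.filter (fun j => i < j),
                ((σ2 i j + (1 - 2 * p i j) * Z i j ω + 2 * Δ i * Z i j ω)
                  + (σ2 j i + (1 - 2 * p j i) * Z j i ω + 2 * Δ j * Z j i ω))
                = 2 * σ2 i j + (2 * aa i j) * Z i j ω := by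
              intro i j _
              rw [hzsym i j ω, hpsym j i]
              simp only [hσ2, haa]
              rw [hpsym j i]
              ring
            rw [Finset.sum_congr rfl fun i _ => Finset.sum_congr rfl (e4 i)]
            rw [pair_flatten (fun i j => i < j)
              (fun i j => 2 * σ2 i j + 2 * aa i j * Z i j ω), ← hPA,
              Finset.sum_add_distrib]
            congr 1
            exact (Finset.mul_sum _ _ _).symm
          have hTb : (∑ i, ∑ j ∈ univ.filter (fun j => j ≠ i),
              ∑ k ∈ (univ.filter (fun k => k ≠ i)).filter (fun k => j < k),
                Z i j ω * Z i k ω)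
            = ∑ t ∈ PB, (Z t.1 t.2.1 ω * Z t.1 t.2.2 ω + Z t.1 t.2.1 ω * Z t.2.1 t.2.2 ω
                + Z t.1 t.2.2 ω * Z t.2.1 t.2.2 ω) := by
            rw [cherry_reindex]
            have e5 : ∀ a : Fin n, ∀ b ∈ univ.filter (fun b => a < b),
                ∀ c ∈ univ.filter (fun c => b < c),
                (Z a b ω * Z a c ω + Z b a ω * Z b c ω + Z c a ω * Z c b ω)
                = Z a b ω * Z a c ω + Z a b ω * Z b c ω + Z a c ω * Z b c ω := by
              intro a b _ c _
              rw [hzsym a b ω, hzsym a c ω, hzsym b c ω]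
            rw [Finset.sum_congr rfl fun a _ => Finset.sum_congr rfl fun b hb =>
              Finset.sum_congr rfl (e5 a b hb)]
            rw [triple_flatten (fun a b => a < b) (fun a b c => b < c)
              (fun a b c => Z a b ω * Z a c ω + Z a b ω * Z b c ω + Z a c ω * Z b c ω),
              ← hPB]
          rw [hTa, hTb, hC]
          simp only [hB]
          rw [Finset.mul_sum PB (fun t => Z t.1 t.2.1 ω * Z t.1 t.2.2 ω
            + Z t.1 t.2.1 ω * Z t.2.1 t.2.2 ω + Z t.1 t.2.2 ω * Z t.2.1 t.2.2 ω) 2]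
          ring
  -- boundedness
  have hbZ : ∀ i j, BddM μ (Z i j) := by
    intro i j
    refine ⟨(hmeas i j).sub measurable_const, 1 + |p i j|, fun ω => ?_⟩
    have h1 : |Y i j ω| ≤ 1 := by rcases h01 i j ω with h | h <;> simp [h]
    simp only [hZ]
    calc |Y i j ω - p i j| ≤ |Y i j ω| + |p i j| := abs_sub _ _
      _ ≤ 1 + |p i j| := by linarith
  have hbA : BddM μ A := by
    rw [hA]
    exact BddM.sum PA _ (fun q _ => (BddM.const _).mul (hbZ q.1 q.2))
  have hbB : BddM μ B := by
    rw [hB]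
    exact BddM.sum PB _ (fun t _ => (BddM.const 2).mul
      ((((hbZ t.1 t.2.1).mul (hbZ t.1 t.2.2)).add
        ((hbZ t.1 t.2.1).mul (hbZ t.2.1 t.2.2))).add
        ((hbZ t.1 t.2.2).mul (hbZ t.2.1 t.2.2))))
  have hbL : BddM μ (fun ω => A ω + B ω) := hbA.add hbB
  have hbG : BddM μ (fun ω => C + (A ω + B ω)) := (BddM.const C).add hbL
  -- first moments
  have hintZ : ∀ i j : Fin n, i < j → ∫ ω, Z i j ω ∂μ = 0 := fun i j h =>
    m1 hmeas h01 hmean h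
  have hintA : ∫ ω, A ω ∂μ = 0 := by
    simp only [hA]
    rw [integral_finset_sum _ (fun q _ => ((BddM.const _).mul (hbZ q.1 q.2)).integrable)]
    refine Finset.sum_eq_zero fun q hq => ?_
    simp only [hPA, Finset.mem_filter, Finset.mem_univ, true_and] at hq
    rw [integral_const_mul, hintZ q.1 q.2 hq, mul_zero]
  have hintB : ∫ ω, B ω ∂μ = 0 := by
    simp only [hB]
    rw [integral_finset_sum _ (fun t _ => ((BddM.const 2).mul
      ((((hbZ t.1 t.2.1).mul (hbZ t.1 t.2.2)).add
        ((hbZ t.1 t.2.1).mul (hbZ t.2.1 t.2.2))).add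
        ((hbZ t.1 t.2.2).mul (hbZ t.2.1 t.2.2)))).integrable)]
    refine Finset.sum_eq_zero fun t ht => ?_
    simp only [hPB, Finset.mem_filter, Finset.mem_univ, true_and] at ht
    obtain ⟨ht1, ht2⟩ := ht
    rw [integral_const_mul]
    rw [integral_add (((hbZ t.1 t.2.1).mul (hbZ t.1 t.2.2)).add
        ((hbZ t.1 t.2.1).mul (hbZ t.2.1 t.2.2))).integrable
      ((hbZ t.1 t.2.2).mul (hbZ t.2.1 t.2.2)).integrable,
      integral_add ((hbZ t.1 t.2.1).mul (hbZ t.1 t.2.2)).integrable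
        ((hbZ t.1 t.2.1).mul (hbZ t.2.1 t.2.2)).integrable]
    have r1 : ∫ ω, Z t.1 t.2.1 ω * Z t.1 t.2.2 ω ∂μ = 0 := by
      have hm := m2 hmeas h01 hmean hindep ht1 (ht1.trans ht2)
      rw [if_neg (fun hc : (t.1, t.2.1) = (t.1, t.2.2) =>
        absurd (congrArg Prod.snd hc) (ne_of_lt ht2))] at hm
      exact hm
    have r2 : ∫ ω, Z t.1 t.2.1 ω * Z t.2.1 t.2.2 ω ∂μ = 0 := by
      have hm := m2 hmeas h01 hmean hindep ht1 ht2
      rw [if_neg (fun hc : (t.1, t.2.1) = (t.2.1, t.2.2) =>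
        absurd (congrArg Prod.fst hc) (ne_of_lt ht1))] at hm
      exact hm
    have r3 : ∫ ω, Z t.1 t.2.2 ω * Z t.2.1 t.2.2 ω ∂μ = 0 := by
      have hm := m2 hmeas h01 hmean hindep (ht1.trans ht2) ht2
      rw [if_neg (fun hc : (t.1, t.2.2) = (t.2.1, t.2.2) =>
        absurd (congrArg Prod.fst hc) (ne_of_lt ht1))] at hm
      exact hm
    rw [r1, r2, r3]
    ring
  have hintL : ∫ ω, (A ω + B ω) ∂μ = 0 := by
    rw [integral_add hbA.integrable hbB.integrable, hintA, hintB, add_zero]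
  -- second moment: A*A
  have hintAA : ∫ ω, A ω * A ω ∂μ
      = ∑ q ∈ PA, 4 * aa q.1 q.2 ^ 2 * σ2 q.1 q.2 := by
    have he : (fun ω => A ω * A ω) = fun ω => ∑ q ∈ PA, ∑ r ∈ PA,
        (2 * aa q.1 q.2 * Z q.1 q.2 ω) * (2 * aa r.1 r.2 * Z r.1 r.2 ω) := by
      funext ω
      simp only [hA]
      rw [Finset.sum_mul_sum]
    rw [he, integral_finset_sum _ (fun q _ => (BddM.sum PA _ (fun r _ =>
      (((BddM.const _).mul (hbZ q.1 q.2)).mul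
        ((BddM.const _).mul (hbZ r.1 r.2))))).integrable)]
    rw [Finset.sum_congr rfl fun q _ => integral_finset_sum _ (fun r _ =>
      ((((BddM.const _).mul (hbZ q.1 q.2)).mul
        ((BddM.const _).mul (hbZ r.1 r.2)))).integrable)]
    refine Finset.sum_congr rfl fun q hqmem => ?_
    have hq : q.1 < q.2 := by
      have := hqmem
      simp only [hPA, Finset.mem_filter, Finset.mem_univ, true_and] at this
      exact this
    have hterm : ∀ r ∈ PA, (∫ ω, (2 * aa q.1 q.2 * Z q.1 q.2 ω)
          * (2 * aa r.1 r.2 * Z r.1 r.2 ω) ∂μ)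
        = if r = q then 4 * aa q.1 q.2 ^ 2 * σ2 q.1 q.2 else 0 := by
      intro r hrmem
      have hr : r.1 < r.2 := by
        simp only [hPA, Finset.mem_filter, Finset.mem_univ, true_and] at hrmem
        exact hrmem
      have heq2 : (fun ω => (2 * aa q.1 q.2 * Z q.1 q.2 ω)
            * (2 * aa r.1 r.2 * Z r.1 r.2 ω))
          = fun ω => (2 * aa q.1 q.2 * (2 * aa r.1 r.2))
            * ((Y q.1 q.2 ω - p q.1 q.2) * (Y r.1 r.2 ω - p r.1 r.2)) := by
        funext ω
        simp only [hZ]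
        ring
      rw [heq2, integral_const_mul, m2 hmeas h01 hmean hindep hq hr]
      by_cases hrq : r = q
      · subst hrq
        rw [if_pos rfl, if_pos rfl]
        simp only [hσ2]
        ring
      · rw [if_neg (fun hc : (q.1, q.2) = (r.1, r.2) => hrq (by
          rw [Prod.mk.eta, Prod.mk.eta] at hc
          exact hc.symm)), if_neg hrq, mul_zero]
    rw [Finset.sum_congr rfl hterm, Finset.sum_ite_eq' PA q _, if_pos hqmem]
  -- second moment: A*B = 0
  have hintAB : ∫ ω, A ω * B ω ∂μ = 0 := by
    have he : (fun ω => A ω * B ω) = fun ω => ∑ q ∈ PA, ∑ t ∈ PB,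
        (2 * aa q.1 q.2 * Z q.1 q.2 ω)
          * (2 * (Z t.1 t.2.1 ω * Z t.1 t.2.2 ω + Z t.1 t.2.1 ω * Z t.2.1 t.2.2 ω
            + Z t.1 t.2.2 ω * Z t.2.1 t.2.2 ω)) := by
      funext ω
      simp only [hA, hB]
      rw [Finset.sum_mul_sum]
    have hbterm : ∀ (q : Fin n × Fin n) (t : Fin n × Fin n × Fin n),
        BddM μ (fun ω => (2 * aa q.1 q.2 * Z q.1 q.2 ω)
          * (2 * (Z t.1 t.2.1 ω * Z t.1 t.2.2 ω + Z t.1 t.2.1 ω * Z t.2.1 t.2.2 ω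
            + Z t.1 t.2.2 ω * Z t.2.1 t.2.2 ω))) := fun q t =>
      ((BddM.const _).mul (hbZ q.1 q.2)).mul ((BddM.const 2).mul
        ((((hbZ t.1 t.2.1).mul (hbZ t.1 t.2.2)).add
          ((hbZ t.1 t.2.1).mul (hbZ t.2.1 t.2.2))).add
          ((hbZ t.1 t.2.2).mul (hbZ t.2.1 t.2.2))))
    rw [he, integral_finset_sum _ (fun q _ =>
      (BddM.sum PB _ (fun t _ => hbterm q t)).integrable)]
    refine Finset.sum_eq_zero fun q hqmem => ?_
    have hq : q.1 < q.2 := by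
      simp only [hPA, Finset.mem_filter, Finset.mem_univ, true_and] at hqmem
      exact hqmem
    rw [integral_finset_sum _ (fun t _ => (hbterm q t).integrable)]
    refine Finset.sum_eq_zero fun t htmem => ?_
    have ht : t.1 < t.2.1 ∧ t.2.1 < t.2.2 := by
      simp only [hPB, Finset.mem_filter, Finset.mem_univ, true_and] at htmem
      exact htmem
    obtain ⟨ht1, ht2⟩ := ht
    have heq3 : (fun ω => (2 * aa q.1 q.2 * Z q.1 q.2 ω)
          * (2 * (Z t.1 t.2.1 ω * Z t.1 t.2.2 ω + Z t.1 t.2.1 ω * Z t.2.1 t.2.2 ω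
            + Z t.1 t.2.2 ω * Z t.2.1 t.2.2 ω)))
        = fun ω => (4 * aa q.1 q.2) * ((Y q.1 q.2 ω - p q.1 q.2)
              * ((Y t.1 t.2.1 ω - p t.1 t.2.1) * (Y t.1 t.2.2 ω - p t.1 t.2.2)))
          + ((4 * aa q.1 q.2) * ((Y q.1 q.2 ω - p q.1 q.2)
              * ((Y t.1 t.2.1 ω - p t.1 t.2.1) * (Y t.2.1 t.2.2 ω - p t.2.1 t.2.2)))
          + (4 * aa q.1 q.2) * ((Y q.1 q.2 ω - p q.1 q.2)
              * ((Y t.1 t.2.2 ω - p t.1 t.2.2) * (Y t.2.1 t.2.2 ω - p t.2.1 t.2.2)))) := by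
      funext ω
      simp only [hZ]
      ring
    have hint1 : Integrable (fun ω => (4 * aa q.1 q.2) * ((Y q.1 q.2 ω - p q.1 q.2)
        * ((Y t.1 t.2.1 ω - p t.1 t.2.1) * (Y t.1 t.2.2 ω - p t.1 t.2.2)))) μ :=
      ((BddM.const _).mul ((hbZ q.1 q.2).mul
        ((hbZ t.1 t.2.1).mul (hbZ t.1 t.2.2)))).integrable
    have hint2 : Integrable (fun ω => (4 * aa q.1 q.2) * ((Y q.1 q.2 ω - p q.1 q.2)
        * ((Y t.1 t.2.1 ω - p t.1 t.2.1) * (Y t.2.1 t.2.2 ω - p t.2.1 t.2.2)))) μ :=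
      ((BddM.const _).mul ((hbZ q.1 q.2).mul
        ((hbZ t.1 t.2.1).mul (hbZ t.2.1 t.2.2)))).integrable
    have hint3 : Integrable (fun ω => (4 * aa q.1 q.2) * ((Y q.1 q.2 ω - p q.1 q.2)
        * ((Y t.1 t.2.2 ω - p t.1 t.2.2) * (Y t.2.1 t.2.2 ω - p t.2.1 t.2.2)))) μ :=
      ((BddM.const _).mul ((hbZ q.1 q.2).mul
        ((hbZ t.1 t.2.2).mul (hbZ t.2.1 t.2.2)))).integrable
    have hint23 : Integrable (fun ω =>
        (4 * aa q.1 q.2) * ((Y q.1 q.2 ω - p q.1 q.2)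
          * ((Y t.1 t.2.1 ω - p t.1 t.2.1) * (Y t.2.1 t.2.2 ω - p t.2.1 t.2.2)))
        + (4 * aa q.1 q.2) * ((Y q.1 q.2 ω - p q.1 q.2)
          * ((Y t.1 t.2.2 ω - p t.1 t.2.2) * (Y t.2.1 t.2.2 ω - p t.2.1 t.2.2)))) μ :=
      (((BddM.const _).mul ((hbZ q.1 q.2).mul
          ((hbZ t.1 t.2.1).mul (hbZ t.2.1 t.2.2)))).add
        ((BddM.const _).mul ((hbZ q.1 q.2).mul
          ((hbZ t.1 t.2.2).mul (hbZ t.2.1 t.2.2))))).integrable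
    rw [heq3, integral_add hint1 hint23]
    rw [integral_add hint2 hint3,
      integral_const_mul, integral_const_mul, integral_const_mul,
      m3 hmeas h01 hmean hindep hq ht1 (ht1.trans ht2)
        (fun hc : (t.1, t.2.1) = (t.1, t.2.2) =>
          absurd (congrArg Prod.snd hc) (ne_of_lt ht2)),
      m3 hmeas h01 hmean hindep hq ht1 ht2
        (fun hc : (t.1, t.2.1) = (t.2.1, t.2.2) =>
          absurd (congrArg Prod.fst hc) (ne_of_lt ht1)),
      m3 hmeas h01 hmean hindep hq (ht1.trans ht2) ht2
        (fun hc : (t.1, t.2.2) = (t.2.1, t.2.2) =>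
          absurd (congrArg Prod.fst hc) (ne_of_lt ht1))]
    ring
  -- second moment: B*B
  have hintBB : ∫ ω, B ω * B ω ∂μ = ∑ t ∈ PB,
      4 * (p t.1 t.2.1 * (1 - p t.1 t.2.1) * (p t.1 t.2.2 * (1 - p t.1 t.2.2))
        + p t.1 t.2.1 * (1 - p t.1 t.2.1) * (p t.2.1 t.2.2 * (1 - p t.2.1 t.2.2))
        + p t.1 t.2.2 * (1 - p t.1 t.2.2) * (p t.2.1 t.2.2 * (1 - p t.2.1 t.2.2))) := by
    have hbBt : ∀ t : Fin n × Fin n × Fin n, BddM μ (fun ω =>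
        2 * (Z t.1 t.2.1 ω * Z t.1 t.2.2 ω + Z t.1 t.2.1 ω * Z t.2.1 t.2.2 ω
          + Z t.1 t.2.2 ω * Z t.2.1 t.2.2 ω)) := fun t =>
      (BddM.const 2).mul ((((hbZ t.1 t.2.1).mul (hbZ t.1 t.2.2)).add
        ((hbZ t.1 t.2.1).mul (hbZ t.2.1 t.2.2))).add
        ((hbZ t.1 t.2.2).mul (hbZ t.2.1 t.2.2)))
    have he : (fun ω => B ω * B ω) = fun ω => ∑ t ∈ PB, ∑ u ∈ PB,
        (2 * (Z t.1 t.2.1 ω * Z t.1 t.2.2 ω + Z t.1 t.2.1 ω * Z t.2.1 t.2.2 ω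
          + Z t.1 t.2.2 ω * Z t.2.1 t.2.2 ω))
        * (2 * (Z u.1 u.2.1 ω * Z u.1 u.2.2 ω + Z u.1 u.2.1 ω * Z u.2.1 u.2.2 ω
          + Z u.1 u.2.2 ω * Z u.2.1 u.2.2 ω)) := by
      funext ω
      simp only [hB]
      rw [Finset.sum_mul_sum]
    rw [he, integral_finset_sum _ (fun t _ => (BddM.sum PB _ (fun u _ =>
      (hbBt t).mul (hbBt u))).integrable)]
    rw [Finset.sum_congr rfl fun t _ => integral_finset_sum _ (fun u _ =>
      ((hbBt t).mul (hbBt u)).integrable)]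
    refine Finset.sum_congr rfl fun t htmem => ?_
    have ht' : t.1 < t.2.1 ∧ t.2.1 < t.2.2 := by
      simp only [hPB, Finset.mem_filter, Finset.mem_univ, true_and] at htmem
      exact htmem
    obtain ⟨ht1, ht2⟩ := ht'
    have hterm : ∀ u ∈ PB, (∫ ω,
        (2 * (Z t.1 t.2.1 ω * Z t.1 t.2.2 ω + Z t.1 t.2.1 ω * Z t.2.1 t.2.2 ω
          + Z t.1 t.2.2 ω * Z t.2.1 t.2.2 ω))
        * (2 * (Z u.1 u.2.1 ω * Z u.1 u.2.2 ω + Z u.1 u.2.1 ω * Z u.2.1 u.2.2 ω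
          + Z u.1 u.2.2 ω * Z u.2.1 u.2.2 ω)) ∂μ)
        = if u = t then
          4 * (p t.1 t.2.1 * (1 - p t.1 t.2.1) * (p t.1 t.2.2 * (1 - p t.1 t.2.2))
            + p t.1 t.2.1 * (1 - p t.1 t.2.1) * (p t.2.1 t.2.2 * (1 - p t.2.1 t.2.2))
            + p t.1 t.2.2 * (1 - p t.1 t.2.2) * (p t.2.1 t.2.2 * (1 - p t.2.1 t.2.2)))
          else 0 := by
      intro u humem
      have hu' : u.1 < u.2.1 ∧ u.2.1 < u.2.2 := by
        simp only [hPB, Finset.mem_filter, Finset.mem_univ, true_and] at humem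
        exact humem
      obtain ⟨hu1, hu2⟩ := hu'
      have heq9 : (fun ω =>
          (2 * (Z t.1 t.2.1 ω * Z t.1 t.2.2 ω + Z t.1 t.2.1 ω * Z t.2.1 t.2.2 ω
            + Z t.1 t.2.2 ω * Z t.2.1 t.2.2 ω))
          * (2 * (Z u.1 u.2.1 ω * Z u.1 u.2.2 ω + Z u.1 u.2.1 ω * Z u.2.1 u.2.2 ω
            + Z u.1 u.2.2 ω * Z u.2.1 u.2.2 ω)))
          = fun ω => ((4:ℝ) * ((Y t.1 t.2.1 ω - p t.1 t.2.1) * (Y t.1 t.2.2 ω - p t.1 t.2.2) * ((Y u.1 u.2.1 ω - p u.1 u.2.1) * (Y u.1 u.2.2 ω - p u.1 u.2.2))) + ((4:ℝ) * ((Y t.1 t.2.1 ω - p t.1 t.2.1) * (Y t.1 t.2.2 ω - p t.1 t.2.2) * ((Y u.1 u.2.1 ω - p u.1 u.2.1) * (Y u.2.1 u.2.2 ω - p u.2.1 u.2.2))) + ((4:ℝ) * ((Y t.1 t.2.1 ω - p t.1 t.2.1) * (Y t.1 t.2.2 ω - p t.1 t.2.2) * ((Y u.1 u.2.2 ω - p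 u.1 u.2.2) * (Y u.2.1 u.2.2 ω - p u.2.1 u.2.2))) + ((4:ℝ) * ((Y t.1 t.2.1 ω - p t.1 t.2.1) * (Y t.2.1 t.2.2 ω - p t.2.1 t.2.2) * ((Y u.1 u.2.1 ω - p u.1 u.2.1) * (Y u.1 u.2.2 ω - p u.1 u.2.2))) + ((4:ℝ) * ((Y t.1 t.2.1 ω - p t.1 t.2.1) * (Y t.2.1 t.2.2 ω - p t.2.1 t.2.2) * ((Y u.1 u.2.1 ω - p u.1 u.2.1) * (Y u.2.1 u.2.2 ω - p u.2.1 u.2.2))) + ((4:ℝ) * ((Y t.1 t.2.1 ω - p t.1 t.2.1) * (Y t.2.1 t.2.2 ω - p t.2.1 t.2.2) * ((Y u.1 u.2.2 ω - p u.1 u.2.2) * (Y u.2.1 u.2.2 ω - p u.2.1 u.2.2))) + ((4:ℝ) * ((Y t.1 t.2.2 ω - p t.1 t.2.2) * (Y t.2.1 t.2.2 ω - p t.2.1 t.2.2) * ((Y u.1 u.2.1 ω - p u.1 u.2.1) * (Y u.1 u.2.2 ω - p u.1 u.2.2))) + ((4:ℝ) * ((Y t.1 t.2.2 ω - p t.1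 t.2.2) * (Y t.2.1 t.2.2 ω - p t.2.1 t.2.2) * ((Y u.1 u.2.1 ω - p u.1 u.2.1) * (Y u.2.1 u.2.2 ω - p u.2.1 u.2.2))) + (4:ℝ) * ((Y t.1 t.2.2 ω - p t.1 t.2.2) * (Y t.2.1 t.2.2 ω - p t.2.1 t.2.2) * ((Y u.1 u.2.2 ω - p u.1 u.2.2) * (Y u.2.1 u.2.2 ω - p u.2.1 u.2.2))))))))))) := by
        funext ω
        simp only [hZ]
        ring
      have hbd1 : BddM μ (fun ω => (4:ℝ) * ((Y t.1 t.2.1 ω - p t.1 t.2.1) * (Y t.1 t.2.2 ω - p t.1 t.2.2) * ((Y u.1 u.2.1 ω - p u.1 u.2.1) * (Y u.1 u.2.2 ω - p u.1 u.2.2)))) := ((BddM.const (4:ℝ)).mul (((hbZ t.1 t.2.1).mul (hbZ t.1 t.2.2)).mul ((hbZ u.1 u.2.1).mul (hbZ u.1 u.2.2))))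
      have hbd2 : BddM μ (fun ω => (4:ℝ) * ((Y t.1 t.2.1 ω - p t.1 t.2.1) * (Y t.1 t.2.2 ω - p t.1 t.2.2) * ((Y u.1 u.2.1 ω - p u.1 u.2.1) * (Y u.2.1 u.2.2 ω - p u.2.1 u.2.2)))) := ((BddM.const (4:ℝ)).mul (((hbZ t.1 t.2.1).mul (hbZ t.1 t.2.2)).mul ((hbZ u.1 u.2.1).mul (hbZ u.2.1 u.2.2))))
      have hbd3 : BddM μ (fun ω => (4:ℝ) * ((Y t.1 t.2.1 ω - p t.1 t.2.1) * (Y t.1 t.2.2 ω - p t.1 t.2.2) * ((Y u.1 u.2.2 ω - p u.1 u.2.2) * (Y u.2.1 u.2.2 ω - p u.2.1 u.2.2)))) := ((BddM.const (4:ℝ)).mul (((hbZ t.1 t.2.1).mul (hbZ t.1 t.2.2)).mul ((hbZ u.1 u.2.2).mul (hbZ u.2.1 u.2.2))))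
      have hbd4 : BddM μ (fun ω => (4:ℝ) * ((Y t.1 t.2.1 ω - p t.1 t.2.1) * (Y t.2.1 t.2.2 ω - p t.2.1 t.2.2) * ((Y u.1 u.2.1 ω - p u.1 u.2.1) * (Y u.1 u.2.2 ω - p u.1 u.2.2)))) := ((BddM.const (4:ℝ)).mul (((hbZ t.1 t.2.1).mul (hbZ t.2.1 t.2.2)).mul ((hbZ u.1 u.2.1).mul (hbZ u.1 u.2.2))))
      have hbd5 : BddM μ (fun ω => (4:ℝ) * ((Y t.1 t.2.1 ω - p t.1 t.2.1) * (Y t.2.1 t.2.2 ω - p t.2.1 t.2.2) * ((Y u.1 u.2.1 ω - p u.1 u.2.1) * (Y u.2.1 u.2.2 ω - p u.2.1 u.2.2)))) := ((BddM.const (4:ℝ)).mul (((hbZ t.1 t.2.1).mul (hbZ t.2.1 t.2.2)).mul ((hbZ u.1 u.2.1).mul (hbZ u.2.1 u.2.2))))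
      have hbd6 : BddM μ (fun ω => (4:ℝ) * ((Y t.1 t.2.1 ω - p t.1 t.2.1) * (Y t.2.1 t.2.2 ω - p t.2.1 t.2.2) * ((Y u.1 u.2.2 ω - p u.1 u.2.2) * (Y u.2.1 u.2.2 ω - p u.2.1 u.2.2)))) := ((BddM.const (4:ℝ)).mul (((hbZ t.1 t.2.1).mul (hbZ t.2.1 t.2.2)).mul ((hbZ u.1 u.2.2).mul (hbZ u.2.1 u.2.2))))
      have hbd7 : BddM μ (fun ω => (4:ℝ) * ((Y t.1 t.2.2 ω - p t.1 t.2.2) * (Y t.2.1 t.2.2 ω - p t.2.1 t.2.2) * ((Y u.1 u.2.1 ω - p u.1 u.2.1) * (Y u.1 u.2.2 ω - p u.1 u.2.2)))) := ((BddM.const (4:ℝ)).mul (((hbZ t.1 t.2.2).mul (hbZ t.2.1 t.2.2)).mul ((hbZ u.1 u.2.1).mul (hbZ u.1 u.2.2))))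
      have hbd8 : BddM μ (fun ω => (4:ℝ) * ((Y t.1 t.2.2 ω - p t.1 t.2.2) * (Y t.2.1 t.2.2 ω - p t.2.1 t.2.2) * ((Y u.1 u.2.1 ω - p u.1 u.2.1) * (Y u.2.1 u.2.2 ω - p u.2.1 u.2.2)))) := ((BddM.const (4:ℝ)).mul (((hbZ t.1 t.2.2).mul (hbZ t.2.1 t.2.2)).mul ((hbZ u.1 u.2.1).mul (hbZ u.2.1 u.2.2))))
      have hbd9 : BddM μ (fun ω => (4:ℝ) * ((Y t.1 t.2.2 ω - p t.1 t.2.2) * (Y t.2.1 t.2.2 ω - p t.2.1 t.2.2) * ((Y u.1 u.2.2 ω - p u.1 u.2.2) * (Y u.2.1 u.2.2 ω - p u.2.1 u.2.2)))) := ((BddM.const (4:ℝ)).mul (((hbZ t.1 t.2.2).mul (hbZ t.2.1 t.2.2)).mul ((hbZ u.1 u.2.2).mul (hbZ u.2.1 u.2.2))))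
      have htl9 : BddM μ (fun ω => (4:ℝ) * ((Y t.1 t.2.2 ω - p t.1 t.2.2) * (Y t.2.1 t.2.2 ω - p t.2.1 t.2.2) * ((Y u.1 u.2.2 ω - p u.1 u.2.2) * (Y u.2.1 u.2.2 ω - p u.2.1 u.2.2)))) := hbd9
      have htl8 : BddM μ (fun ω => ((4:ℝ) * ((Y t.1 t.2.2 ω - p t.1 t.2.2) * (Y t.2.1 t.2.2 ω - p t.2.1 t.2.2) * ((Y u.1 u.2.1 ω - p u.1 u.2.1) * (Y u.2.1 u.2.2 ω - p u.2.1 u.2.2))) + (4:ℝ) * ((Y t.1 t.2.2 ω - p t.1 t.2.2) * (Y t.2.1 t.2.2 ω - p t.2.1 t.2.2) * ((Y u.1 u.2.2 ω - p u.1 u.2.2) * (Y u.2.1 u.2.2 ω - p u.2.1 u.2.2))))) := hbd8.add htl9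
      have htl7 : BddM μ (fun ω => ((4:ℝ) * ((Y t.1 t.2.2 ω - p t.1 t.2.2) * (Y t.2.1 t.2.2 ω - p t.2.1 t.2.2) * ((Y u.1 u.2.1 ω - p u.1 u.2.1) * (Y u.1 u.2.2 ω - p u.1 u.2.2))) + ((4:ℝ) * ((Y t.1 t.2.2 ω - p t.1 t.2.2) * (Y t.2.1 t.2.2 ω - p t.2.1 t.2.2) * ((Y u.1 u.2.1 ω - p u.1 u.2.1) * (Y u.2.1 u.2.2 ω - p u.2.1 u.2.2))) + (4:ℝ) * ((Y t.1 t.2.2 ω - p t.1 t.2.2) * (Y t.2.1 t.2.2 ω - p t.2.1 t.2.2) * ((Y u.1 u.2.2 ω - p u.1 u.2.2) * (Y u.2.1 u.2.2 ω - p u.2.1 u.2.2)))))) := hbd7.add htl8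
      have htl6 : BddM μ (fun ω => ((4:ℝ) * ((Y t.1 t.2.1 ω - p t.1 t.2.1) * (Y t.2.1 t.2.2 ω - p t.2.1 t.2.2) * ((Y u.1 u.2.2 ω - p u.1 u.2.2) * (Y u.2.1 u.2.2 ω - p u.2.1 u.2.2))) + ((4:ℝ) * ((Y t.1 t.2.2 ω - p t.1 t.2.2) * (Y t.2.1 t.2.2 ω - p t.2.1 t.2.2) * ((Y u.1 u.2.1 ω - p u.1 u.2.1) * (Y u.1 u.2.2 ω - p u.1 u.2.2))) + ((4:ℝ) * ((Y t.1 t.2.2 ω - p t.1 t.2.2) * (Y t.2.1 t.2.2 ω - p t.2.1 t.2.2) * ((Y u.1 u.2.1 ω - p u.1 u.2.1) * (Y u.2.1 u.2.2 ω - p u.2.1 u.2.2))) + (4:ℝ) * ((Y t.1 t.2.2 ω - p t.1 t.2.2) * (Y t.2.1 t.2.2 ω - p t.2.1 t.2.2) * ((Y u.1 u.2.2 ω - p u.1 u.2.2) * (Y u.2.1 u.2.2 ω - p u.2.1 u.2.2))))))) := hbd6.add htl7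
      have htl5 : BddM μ (fun ω => ((4:ℝ) * ((Y t.1 t.2.1 ω - p t.1 t.2.1) * (Y t.2.1 t.2.2 ω - p t.2.1 t.2.2) * ((Y u.1 u.2.1 ω - p u.1 u.2.1) * (Y u.2.1 u.2.2 ω - p u.2.1 u.2.2))) + ((4:ℝ) * ((Y t.1 t.2.1 ω - p t.1 t.2.1) * (Y t.2.1 t.2.2 ω - p t.2.1 t.2.2) * ((Y u.1 u.2.2 ω - p u.1 u.2.2) * (Y u.2.1 u.2.2 ω - p u.2.1 u.2.2))) + ((4:ℝ) * ((Y t.1 t.2.2 ω - p t.1 t.2.2) * (Y t.2.1 t.2.2 ω - p t.2.1 t.2.2) * ((Y u.1 u.2.1 ω - p u.1 u.2.1) * (Y u.1 u.2.2 ω - p u.1 u.2.2))) + ((4:ℝ) * ((Y t.1 t.2.2 ω - p t.1 t.2.2) * (Y t.2.1 t.2.2 ω - p t.2.1 t.2.2) * ((Y u.1 u.2.1 ω - p u.1 u.2.1) * (Y u.2.1 u.2.2 ω - p u.2.1 u.2.2))) + (4:ℝ) * ((Y t.1 t.2.2 ω - p t.1 t.2.2) * (Y t.2.1 t.2.2 ω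 - p t.2.1 t.2.2) * ((Y u.1 u.2.2 ω - p u.1 u.2.2) * (Y u.2.1 u.2.2 ω - p u.2.1 u.2.2)))))))) := hbd5.add htl6
      have htl4 : BddM μ (fun ω => ((4:ℝ) * ((Y t.1 t.2.1 ω - p t.1 t.2.1) * (Y t.2.1 t.2.2 ω - p t.2.1 t.2.2) * ((Y u.1 u.2.1 ω - p u.1 u.2.1) * (Y u.1 u.2.2 ω - p u.1 u.2.2))) + ((4:ℝ) * ((Y t.1 t.2.1 ω - p t.1 t.2.1) * (Y t.2.1 t.2.2 ω - p t.2.1 t.2.2) * ((Y u.1 u.2.1 ω - p u.1 u.2.1) * (Y u.2.1 u.2.2 ω - p u.2.1 u.2.2))) + ((4:ℝ) * ((Y t.1 t.2.1 ω - p t.1 t.2.1) * (Y t.2.1 t.2.2 ω - p t.2.1 t.2.2) * ((Y u.1 u.2.2 ω - p u.1 u.2.2) * (Y u.2.1 u.2.2 ω - p u.2.1 u.2.2))) + ((4:ℝ) * ((Y t.1 t.2.2 ω - p t.1 t.2.2) * (Y t.2.1 t.2.2 ω - p t.2.1 t.2.2) * ((Y u.1 u.2.1 ω - p u.1 u.2.1)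 * (Y u.1 u.2.2 ω - p u.1 u.2.2))) + ((4:ℝ) * ((Y t.1 t.2.2 ω - p t.1 t.2.2) * (Y t.2.1 t.2.2 ω - p t.2.1 t.2.2) * ((Y u.1 u.2.1 ω - p u.1 u.2.1) * (Y u.2.1 u.2.2 ω - p u.2.1 u.2.2))) + (4:ℝ) * ((Y t.1 t.2.2 ω - p t.1 t.2.2) * (Y t.2.1 t.2.2 ω - p t.2.1 t.2.2) * ((Y u.1 u.2.2 ω - p u.1 u.2.2) * (Y u.2.1 u.2.2 ω - p u.2.1 u.2.2))))))))) := hbd4.add htl5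
      have htl3 : BddM μ (fun ω => ((4:ℝ) * ((Y t.1 t.2.1 ω - p t.1 t.2.1) * (Y t.1 t.2.2 ω - p t.1 t.2.2) * ((Y u.1 u.2.2 ω - p u.1 u.2.2) * (Y u.2.1 u.2.2 ω - p u.2.1 u.2.2))) + ((4:ℝ) * ((Y t.1 t.2.1 ω - p t.1 t.2.1) * (Y t.2.1 t.2.2 ω - p t.2.1 t.2.2) * ((Y u.1 u.2.1 ω - p u.1 u.2.1) * (Y u.1 u.2.2 ω - p u.1 u.2.2))) + ((4:ℝ) * ((Y t.1 t.2.1 ω - p t.1 t.2.1) * (Y t.2.1 t.2.2 ω - p t.2.1 t.2.2) * ((Y u.1 u.2.1 ω - p u.1 u.2.1) * (Y u.2.1 u.2.2 ω - p u.2.1 u.2.2))) + ((4:ℝ) * ((Y t.1 t.2.1 ω - p t.1 t.2.1) * (Y t.2.1 t.2.2 ω - p t.2.1 t.2.2) * ((Y u.1 u.2.2 ω - p u.1 u.2.2) * (Y u.2.1 u.2.2 ω - p u.2.1 u.2.2))) + ((4:ℝ) * ((Y t.1 t.2.2 ω - p t.1 t.2.2) * (Y t.2.1 t.2.2 ω -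 p t.2.1 t.2.2) * ((Y u.1 u.2.1 ω - p u.1 u.2.1) * (Y u.1 u.2.2 ω - p u.1 u.2.2))) + ((4:ℝ) * ((Y t.1 t.2.2 ω - p t.1 t.2.2) * (Y t.2.1 t.2.2 ω - p t.2.1 t.2.2) * ((Y u.1 u.2.1 ω - p u.1 u.2.1) * (Y u.2.1 u.2.2 ω - p u.2.1 u.2.2))) + (4:ℝ) * ((Y t.1 t.2.2 ω - p t.1 t.2.2) * (Y t.2.1 t.2.2 ω - p t.2.1 t.2.2) * ((Y u.1 u.2.2 ω - p u.1 u.2.2) * (Y u.2.1 u.2.2 ω - p u.2.1 u.2.2)))))))))) := hbd3.add htl4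
      have htl2 : BddM μ (fun ω => ((4:ℝ) * ((Y t.1 t.2.1 ω - p t.1 t.2.1) * (Y t.1 t.2.2 ω - p t.1 t.2.2) * ((Y u.1 u.2.1 ω - p u.1 u.2.1) * (Y u.2.1 u.2.2 ω - p u.2.1 u.2.2))) + ((4:ℝ) * ((Y t.1 t.2.1 ω - p t.1 t.2.1) * (Y t.1 t.2.2 ω - p t.1 t.2.2) * ((Y u.1 u.2.2 ω - p u.1 u.2.2) * (Y u.2.1 u.2.2 ω - p u.2.1 u.2.2))) + ((4:ℝ) * ((Y t.1 t.2.1 ω - p t.1 t.2.1) * (Y t.2.1 t.2.2 ω - p t.2.1 t.2.2) * ((Y u.1 u.2.1 ω - p u.1 u.2.1) * (Y u.1 u.2.2 ω - p u.1 u.2.2))) + ((4:ℝ) * ((Y t.1 t.2.1 ω - p t.1 t.2.1) * (Y t.2.1 t.2.2 ω - p t.2.1 t.2.2) * ((Y u.1 u.2.1 ω - p u.1 u.2.1) * (Y u.2.1 u.2.2 ω - p u.2.1 u.2.2))) + ((4:ℝ) * ((Y t.1 t.2.1 ω - p t.1 t.2.1) * (Y t.2.1 t.2.2 ω - p t.2.1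 t.2.2) * ((Y u.1 u.2.2 ω - p u.1 u.2.2) * (Y u.2.1 u.2.2 ω - p u.2.1 u.2.2))) + ((4:ℝ) * ((Y t.1 t.2.2 ω - p t.1 t.2.2) * (Y t.2.1 t.2.2 ω - p t.2.1 t.2.2) * ((Y u.1 u.2.1 ω - p u.1 u.2.1) * (Y u.1 u.2.2 ω - p u.1 u.2.2))) + ((4:ℝ) * ((Y t.1 t.2.2 ω - p t.1 t.2.2) * (Y t.2.1 t.2.2 ω - p t.2.1 t.2.2) * ((Y u.1 u.2.1 ω - p u.1 u.2.1) * (Y u.2.1 u.2.2 ω - p u.2.1 u.2.2))) + (4:ℝ) * ((Y t.1 t.2.2 ω - p t.1 t.2.2) * (Y t.2.1 t.2.2 ω - p t.2.1 t.2.2) * ((Y u.1 u.2.2 ω - p u.1 u.2.2) * (Y u.2.1 u.2.2 ω - p u.2.1 u.2.2))))))))))) := hbd2.add htl3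
      have htl1 : BddM μ (fun ω => ((4:ℝ) * ((Y t.1 t.2.1 ω - p t.1 t.2.1) * (Y t.1 t.2.2 ω - p t.1 t.2.2) * ((Y u.1 u.2.1 ω - p u.1 u.2.1) * (Y u.1 u.2.2 ω - p u.1 u.2.2))) + ((4:ℝ) * ((Y t.1 t.2.1 ω - p t.1 t.2.1) * (Y t.1 t.2.2 ω - p t.1 t.2.2) * ((Y u.1 u.2.1 ω - p u.1 u.2.1) * (Y u.2.1 u.2.2 ω - p u.2.1 u.2.2))) + ((4:ℝ) * ((Y t.1 t.2.1 ω - p t.1 t.2.1) * (Y t.1 t.2.2 ω - p t.1 t.2.2) * ((Y u.1 u.2.2 ω - p u.1 u.2.2) * (Y u.2.1 u.2.2 ω - p u.2.1 u.2.2))) + ((4:ℝ) * ((Y t.1 t.2.1 ω - p t.1 t.2.1) * (Y t.2.1 t.2.2 ω - p t.2.1 t.2.2) * ((Y u.1 u.2.1 ω - p u.1 u.2.1) * (Y u.1 u.2.2 ω - p u.1 u.2.2))) + ((4:ℝ) * ((Y t.1 t.2.1 ω - p t.1 t.2.1) * (Y t.2.1 t.2.2 ω - p t.2.1 t.2.2)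 * ((Y u.1 u.2.1 ω - p u.1 u.2.1) * (Y u.2.1 u.2.2 ω - p u.2.1 u.2.2))) + ((4:ℝ) * ((Y t.1 t.2.1 ω - p t.1 t.2.1) * (Y t.2.1 t.2.2 ω - p t.2.1 t.2.2) * ((Y u.1 u.2.2 ω - p u.1 u.2.2) * (Y u.2.1 u.2.2 ω - p u.2.1 u.2.2))) + ((4:ℝ) * ((Y t.1 t.2.2 ω - p t.1 t.2.2) * (Y t.2.1 t.2.2 ω - p t.2.1 t.2.2) * ((Y u.1 u.2.1 ω - p u.1 u.2.1) * (Y u.1 u.2.2 ω - p u.1 u.2.2))) + ((4:ℝ) * ((Y t.1 t.2.2 ω - p t.1 t.2.2) * (Y t.2.1 t.2.2 ω - p t.2.1 t.2.2) * ((Y u.1 u.2.1 ω - p u.1 u.2.1) * (Y u.2.1 u.2.2 ω - p u.2.1 u.2.2))) + (4:ℝ) * ((Y t.1 t.2.2 ω - p t.1 t.2.2) * (Y t.2.1 t.2.2 ω - p t.2.1 t.2.2) * ((Y u.1 u.2.2 ω - p u.1 u.2.2) * (Y u.2.1 u.2.2 ω - p u.2.1 u.2.2)))))))))))) := hbd1.add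 htl2
      rw [heq9]
      rw [integral_add hbd1.integrable htl2.integrable]
      rw [integral_add hbd2.integrable htl3.integrable]
      rw [integral_add hbd3.integrable htl4.integrable]
      rw [integral_add hbd4.integrable htl5.integrable]
      rw [integral_add hbd5.integrable htl6.integrable]
      rw [integral_add hbd6.integrable htl7.integrable]
      rw [integral_add hbd7.integrable htl8.integrable]
      rw [integral_add hbd8.integrable htl9.integrable]
      rw [integral_const_mul, integral_const_mul, integral_const_mul, integral_const_mul, integral_const_mul, integral_const_mul, integral_const_mul, integral_const_mul, integral_const_mul]
      rw [m4 hmeas h01 hmean hindep ht1 (ht1.trans ht2) hu1 (hu1.trans hu2) (fun hc : (t.1, t.2.1) = (t.1, t.2.2) => absurd (congrArg Prod.snd hc) (ne_of_lt ht2)) (fun hc : (u.1, u.2.1) = (u.1, u.2.2) => absurd (congrArg Prod.snd hc) (ne_of_lt hu2)),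
        m4 hmeas h01 hmean hindep ht1 (ht1.trans ht2) hu1 hu2 (fun hc : (t.1, t.2.1) = (t.1, t.2.2) => absurd (congrArg Prod.snd hc) (ne_of_lt ht2)) (fun hc : (u.1, u.2.1) = (u.2.1, u.2.2) => absurd (congrArg Prod.fst hc) (ne_of_lt hu1)),
        m4 hmeas h01 hmean hindep ht1 (ht1.trans ht2) (hu1.trans hu2) hu2 (fun hc : (t.1, t.2.1) = (t.1, t.2.2) => absurd (congrArg Prod.snd hc) (ne_of_lt ht2)) (fun hc : (u.1, u.2.2) = (u.2.1, u.2.2) => absurd (congrArg Prod.fst hc) (ne_of_lt hu1)),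
        m4 hmeas h01 hmean hindep ht1 ht2 hu1 (hu1.trans hu2) (fun hc : (t.1, t.2.1) = (t.2.1, t.2.2) => absurd (congrArg Prod.fst hc) (ne_of_lt ht1)) (fun hc : (u.1, u.2.1) = (u.1, u.2.2) => absurd (congrArg Prod.snd hc) (ne_of_lt hu2)),
        m4 hmeas h01 hmean hindep ht1 ht2 hu1 hu2 (fun hc : (t.1, t.2.1) = (t.2.1, t.2.2) => absurd (congrArg Prod.fst hc) (ne_of_lt ht1)) (fun hc : (u.1, u.2.1) = (u.2.1, u.2.2) => absurd (congrArg Prod.fst hc) (ne_of_lt hu1)),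
        m4 hmeas h01 hmean hindep ht1 ht2 (hu1.trans hu2) hu2 (fun hc : (t.1, t.2.1) = (t.2.1, t.2.2) => absurd (congrArg Prod.fst hc) (ne_of_lt ht1)) (fun hc : (u.1, u.2.2) = (u.2.1, u.2.2) => absurd (congrArg Prod.fst hc) (ne_of_lt hu1)),
        m4 hmeas h01 hmean hindep (ht1.trans ht2) ht2 hu1 (hu1.trans hu2) (fun hc : (t.1, t.2.2) = (t.2.1, t.2.2) => absurd (congrArg Prod.fst hc) (ne_of_lt ht1)) (fun hc : (u.1, u.2.1) = (u.1, u.2.2) => absurd (congrArg Prod.snd hc) (ne_of_lt hu2)),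
        m4 hmeas h01 hmean hindep (ht1.trans ht2) ht2 hu1 hu2 (fun hc : (t.1, t.2.2) = (t.2.1, t.2.2) => absurd (congrArg Prod.fst hc) (ne_of_lt ht1)) (fun hc : (u.1, u.2.1) = (u.2.1, u.2.2) => absurd (congrArg Prod.fst hc) (ne_of_lt hu1)),
        m4 hmeas h01 hmean hindep (ht1.trans ht2) ht2 (hu1.trans hu2) hu2 (fun hc : (t.1, t.2.2) = (t.2.1, t.2.2) => absurd (congrArg Prod.fst hc) (ne_of_lt ht1)) (fun hc : (u.1, u.2.2) = (u.2.1, u.2.2) => absurd (congrArg Prod.fst hc) (ne_of_lt hu1))]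
      have o1 : (t.1 : ℕ) < (t.2.1 : ℕ) := ht1
      have o2 : (t.2.1 : ℕ) < (t.2.2 : ℕ) := ht2
      have o3 : (u.1 : ℕ) < (u.2.1 : ℕ) := hu1
      have o4 : (u.2.1 : ℕ) < (u.2.2 : ℕ) := hu2
      by_cases hut : u = t
      · subst hut
        rw [if_pos rfl]
        rw [if_pos (Or.inl ⟨rfl, rfl⟩)]
        rw [if_neg (by rintro (⟨ha, hb⟩ | ⟨ha, hb⟩) <;>
          (simp only [Prod.mk.injEq, Fin.ext_iff] at ha hb; omega))]
        rw [if_neg (by rintro (⟨ha, hb⟩ | ⟨ha, hb⟩) <;>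
          (simp only [Prod.mk.injEq, Fin.ext_iff] at ha hb; omega))]
        rw [if_neg (by rintro (⟨ha, hb⟩ | ⟨ha, hb⟩) <;>
          (simp only [Prod.mk.injEq, Fin.ext_iff] at ha hb; omega))]
        rw [if_pos (Or.inl ⟨rfl, rfl⟩)]
        rw [if_neg (by rintro (⟨ha, hb⟩ | ⟨ha, hb⟩) <;>
          (simp only [Prod.mk.injEq, Fin.ext_iff] at ha hb; omega))]
        rw [if_neg (by rintro (⟨ha, hb⟩ | ⟨ha, hb⟩) <;>
          (simp only [Prod.mk.injEq, Fin.ext_iff] at ha hb; omega))]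
        rw [if_neg (by rintro (⟨ha, hb⟩ | ⟨ha, hb⟩) <;>
          (simp only [Prod.mk.injEq, Fin.ext_iff] at ha hb; omega))]
        rw [if_pos (Or.inl ⟨rfl, rfl⟩)]
        ring
      · rw [if_neg hut]
        have hne' : ¬((u.1 : ℕ) = (t.1 : ℕ) ∧ (u.2.1 : ℕ) = (t.2.1 : ℕ)
            ∧ (u.2.2 : ℕ) = (t.2.2 : ℕ)) := by
          rintro ⟨a1, a2, a3⟩
          exact hut (Prod.ext (Fin.ext a1) (Prod.ext (Fin.ext a2) (Fin.ext a3)))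
        rw [if_neg (by rintro (⟨ha, hb⟩ | ⟨ha, hb⟩) <;>
          (simp only [Prod.mk.injEq, Fin.ext_iff] at ha hb; omega))]
        rw [if_neg (by rintro (⟨ha, hb⟩ | ⟨ha, hb⟩) <;>
          (simp only [Prod.mk.injEq, Fin.ext_iff] at ha hb; omega))]
        rw [if_neg (by rintro (⟨ha, hb⟩ | ⟨ha, hb⟩) <;>
          (simp only [Prod.mk.injEq, Fin.ext_iff] at ha hb; omega))]
        rw [if_neg (by rintro (⟨ha, hb⟩ | ⟨ha, hb⟩) <;>
          (simp only [Prod.mk.injEq, Fin.ext_iff] at ha hb; omega))]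
        rw [if_neg (by rintro (⟨ha, hb⟩ | ⟨ha, hb⟩) <;>
          (simp only [Prod.mk.injEq, Fin.ext_iff] at ha hb; omega))]
        rw [if_neg (by rintro (⟨ha, hb⟩ | ⟨ha, hb⟩) <;>
          (simp only [Prod.mk.injEq, Fin.ext_iff] at ha hb; omega))]
        rw [if_neg (by rintro (⟨ha, hb⟩ | ⟨ha, hb⟩) <;>
          (simp only [Prod.mk.injEq, Fin.ext_iff] at ha hb; omega))]
        rw [if_neg (by rintro (⟨ha, hb⟩ | ⟨ha, hb⟩) <;>
          (simp only [Prod.mk.injEq, Fin.ext_iff] at ha hb; omega))]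
        rw [if_neg (by rintro (⟨ha, hb⟩ | ⟨ha, hb⟩) <;>
          (simp only [Prod.mk.injEq, Fin.ext_iff] at ha hb; omega))]
        ring
    rw [Finset.sum_congr rfl hterm, Finset.sum_ite_eq' PB t _, if_pos htmem]
  -- variance of the unnormalized statistic
  have hvar : variance (fun ω => ∑ i,
        ((∑ j ∈ univ.filter (fun j => j ≠ i), Y i j ω)
          - ∑ j ∈ univ.filter (fun j => j ≠ i), p0 i j) ^ 2) μ
      = (∑ q ∈ PA, 4 * aa q.1 q.2 ^ 2 * σ2 q.1 q.2)
        + ∑ t ∈ PB,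
          4 * (p t.1 t.2.1 * (1 - p t.1 t.2.1) * (p t.1 t.2.2 * (1 - p t.1 t.2.2))
            + p t.1 t.2.1 * (1 - p t.1 t.2.1) * (p t.2.1 t.2.2 * (1 - p t.2.1 t.2.2))
            + p t.1 t.2.2 * (1 - p t.1 t.2.2) * (p t.2.1 t.2.2 * (1 - p t.2.1 t.2.2))) := by
    have hGfun : (fun ω => ∑ i,
          ((∑ j ∈ univ.filter (fun j => j ≠ i), Y i j ω)
            - ∑ j ∈ univ.filter (fun j => j ≠ i), p0 i j) ^ 2)
        = fun ω => C + (A ω + B ω) := funext hpt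
    rw [hGfun, variance_eq_sub hbG.memℒp2]
    have hEX : ∫ ω, (C + (A ω + B ω)) ∂μ = C := by
      rw [integral_add (integrable_const C) hbL.integrable, hintL, integral_const]
      simp
    have hI2 : Integrable (fun ω => 2 * C * (A ω + B ω)) μ :=
      ((BddM.const (2 * C)).mul hbL).integrable
    have hI3 : Integrable (fun ω => A ω * A ω) μ := (hbA.mul hbA).integrable
    have hI4 : Integrable (fun ω => 2 * (A ω * B ω)) μ :=
      ((BddM.const 2).mul (hbA.mul hbB)).integrable
    have hI5 : Integrable (fun ω => B ω * B ω) μ := (hbB.mul hbB).integrable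
    have hI45 : Integrable (fun ω => 2 * (A ω * B ω) + B ω * B ω) μ :=
      (((BddM.const 2).mul (hbA.mul hbB)).add (hbB.mul hbB)).integrable
    have hI345 : Integrable (fun ω => A ω * A ω + (2 * (A ω * B ω) + B ω * B ω)) μ :=
      ((hbA.mul hbA).add (((BddM.const 2).mul (hbA.mul hbB)).add
        (hbB.mul hbB))).integrable
    have hI2345 : Integrable (fun ω => 2 * C * (A ω + B ω)
        + (A ω * A ω + (2 * (A ω * B ω) + B ω * B ω))) μ :=
      (((BddM.const (2 * C)).mul hbL).add ((hbA.mul hbA).add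
        (((BddM.const 2).mul (hbA.mul hbB)).add (hbB.mul hbB)))).integrable
    show (∫ ω, (C + (A ω + B ω)) ^ 2 ∂μ) - (∫ ω, (C + (A ω + B ω)) ∂μ) ^ 2 = _
    have hsq2 : (fun ω => (C + (A ω + B ω)) ^ 2)
        = fun ω => C ^ 2 + (2 * C * (A ω + B ω)
            + (A ω * A ω + (2 * (A ω * B ω) + B ω * B ω))) := by
      funext ω
      ring
    rw [hsq2, integral_add (integrable_const (C ^ 2)) hI2345,
      integral_add hI2 hI345, integral_add hI3 hI45, integral_add hI4 hI5,
      integral_const_mul, integral_const_mul, hintL, hintAA, hintAB, hintBB, hEX,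
      integral_const]
    simp
  -- finish
  rw [variance_const_mul, hvar]
  have hR1 : (∑ i, ∑ j ∈ univ.filter (fun j => i < j),
        p i j * (1 - p i j) *
          (1 - 2 * p i j + (∑ k ∈ univ.filter (fun k => k ≠ i), (p i k - p0 i k))
            + (∑ k ∈ univ.filter (fun k => k ≠ j), (p j k - p0 j k))) ^ 2)
      = ∑ q ∈ PA, p q.1 q.2 * (1 - p q.1 q.2)
          * (1 - 2 * p q.1 q.2 + Δ q.1 + Δ q.2) ^ 2 := by
    rw [pair_flatten (fun i j => i < j) (fun i j =>
      p i j * (1 - p i j) *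
        (1 - 2 * p i j + (∑ k ∈ univ.filter (fun k => k ≠ i), (p i k - p0 i k))
          + (∑ k ∈ univ.filter (fun k => k ≠ j), (p j k - p0 j k))) ^ 2), ← hPA]
  have hR2 : (∑ i, ∑ j ∈ univ.filter (fun j => i < j), ∑ k ∈ univ.filter (fun k => j < k),
        (p i j * (1 - p i j) * (p i k * (1 - p i k))
          + p i j * (1 - p i j) * (p j k * (1 - p j k))
          + p i k * (1 - p i k) * (p j k * (1 - p j k))))
      = ∑ t ∈ PB, (p t.1 t.2.1 * (1 - p t.1 t.2.1) * (p t.1 t.2.2 * (1 - p t.1 t.2.2))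
          + p t.1 t.2.1 * (1 - p t.1 t.2.1) * (p t.2.1 t.2.2 * (1 - p t.2.1 t.2.2))
          + p t.1 t.2.2 * (1 - p t.1 t.2.2) * (p t.2.1 t.2.2 * (1 - p t.2.1 t.2.2))) := by
    rw [triple_flatten (fun i j => i < j) (fun i j k => j < k) (fun i j k =>
      p i j * (1 - p i j) * (p i k * (1 - p i k))
        + p i j * (1 - p i j) * (p j k * (1 - p j k))
        + p i k * (1 - p i k) * (p j k * (1 - p j k))), ← hPB]
  rw [hR1, hR2]
  have hS1 : (∑ q ∈ PA, 4 * aa q.1 q.2 ^ 2 * σ2 q.1 q.2)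
      = 4 * ∑ q ∈ PA, p q.1 q.2 * (1 - p q.1 q.2)
          * (1 - 2 * p q.1 q.2 + Δ q.1 + Δ q.2) ^ 2 := by
    rw [Finset.mul_sum]
    exact Finset.sum_congr rfl fun q _ => by simp only [haa, hσ2]; ring
  have hS2 : (∑ t ∈ PB,
        4 * (p t.1 t.2.1 * (1 - p t.1 t.2.1) * (p t.1 t.2.2 * (1 - p t.1 t.2.2))
          + p t.1 t.2.1 * (1 - p t.1 t.2.1) * (p t.2.1 t.2.2 * (1 - p t.2.1 t.2.2))
          + p t.1 t.2.2 * (1 - p t.1 t.2.2) * (p t.2.1 t.2.2 * (1 - p t.2.1 t.2.2))))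
      = 4 * ∑ t ∈ PB,
          (p t.1 t.2.1 * (1 - p t.1 t.2.1) * (p t.1 t.2.2 * (1 - p t.1 t.2.2))
          + p t.1 t.2.1 * (1 - p t.1 t.2.1) * (p t.2.1 t.2.2 * (1 - p t.2.1 t.2.2))
          + p t.1 t.2.2 * (1 - p t.1 t.2.2) * (p t.2.1 t.2.2 * (1 - p t.2.1 t.2.2))) :=
    (Finset.mul_sum _ _ _).symm
  rw [hS1, hS2]
  ring
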